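/- arXiv:math/0405042 — 4 statements merged into one kernel-verified Lean document; each statement's English description precedes it below -/
import Mathlib

section
/- Let β > 0 be a real number and let δ satisfy 0 < δ < min(β, 2π). Then the integral of the function γ ↦ cot(πγ/β) / sin²(γ/2) over the positively oriented circle of radius δ centered at 0 in the complex plane equals 2πi · (2/3) · ( β/(2π) − 2π/β ). -/
open Complex Filter Set Metric

open scoped Topology

/-- `sin z ≠ 0` for `0 < |z| < π`. -/
lemma aux_sin_ne_zero {z : ℂ} (h0 : z ≠ 0) (h : ‖z‖ < Real.pi) :
    Complex.sin z ≠ 0 := by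
  intro hz
  rw [Complex.sin_eq_zero_iff] at hz
  obtain ⟨k, rfl⟩ := hz
  rcases eq_or_ne k 0 with rfl | hk
  · simp at h0
  · have : ‖(k : ℂ) * (Real.pi : ℂ)‖ = |(k : ℝ)| * Real.pi := by
      rw [norm_mul, Complex.norm_intCast, Complex.norm_real, Real.norm_eq_abs,
        abs_of_pos Real.pi_pos]
    rw [this] at h
    have h1 : (1 : ℝ) ≤ |(k : ℝ)| := by
      rw [← Int.cast_abs]
      exact_mod_cast Int.one_le_abs hk
    nlinarith [Real.pi_pos]

/-- Third-order approximation of `sin` with explicit error bound. -/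
lemma aux_sin_bound {z : ℂ} (hz : ‖z‖ ≤ 1) :
    ‖Complex.sin z - (z - z ^ 3 / 6)‖ ≤ ‖z‖ ^ 4 * (5 / 96) := by
  have hb1 : ‖Complex.exp (-z * I) - ∑ m ∈ Finset.range 4, (-z * I) ^ m / m.factorial‖
      ≤ ‖-z * I‖ ^ 4 * ((5 : ℝ) * ((24 : ℝ) * 4)⁻¹) := by
    have := Complex.exp_bound (x := -z * I) (by simpa using hz) (n := 4) (by norm_num)
    simpa [Nat.factorial] using this
  have hb2 : ‖Complex.exp (z * I) - ∑ m ∈ Finset.range 4, (z * I) ^ m / m.factorial‖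
      ≤ ‖z * I‖ ^ 4 * ((5 : ℝ) * ((24 : ℝ) * 4)⁻¹) := by
    have := Complex.exp_bound (x := z * I) (by simpa using hz) (n := 4) (by norm_num)
    simpa [Nat.factorial] using this
  have habs1 : ‖-z * I‖ = ‖z‖ := by simp
  have habs2 : ‖z * I‖ = ‖z‖ := by simp
  rw [habs1] at hb1; rw [habs2] at hb2
  have hkey : Complex.sin z - (z - z ^ 3 / 6) =
      ((Complex.exp (-z * I) - ∑ m ∈ Finset.range 4, (-z * I) ^ m / m.factorial)
        - (Complex.exp (z * I) - ∑ m ∈ Finset.range 4, (z * I) ^ m / m.factorial)) * I / 2 := by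
    rw [Complex.sin]
    simp only [Finset.sum_range_succ, Finset.sum_range_zero, Nat.factorial]
    push_cast
    field_simp
    ring_nf
    simp [Complex.I_sq]
    ring
  rw [hkey]
  calc ‖_ * I / 2‖
      = ‖(Complex.exp (-z * I) - ∑ m ∈ Finset.range 4, (-z * I) ^ m / m.factorial)
        - (Complex.exp (z * I) - ∑ m ∈ Finset.range 4, (z * I) ^ m / m.factorial)‖ / 2 := by
        rw [norm_div, norm_mul]; simp
    _ ≤ (‖z‖ ^ 4 * ((5 : ℝ) * ((24 : ℝ) * 4)⁻¹)
        + ‖z‖ ^ 4 * ((5 : ℝ) * ((24 : ℝ) * 4)⁻¹)) / 2 := by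
        gcongr
        exact (norm_sub_le _ _).trans (add_le_add hb1 hb2)
    _ = ‖z‖ ^ 4 * (5 / 96) := by ring

/-- Second-order approximation of `cos` with explicit error bound. -/
lemma aux_cos_bound {z : ℂ} (hz : ‖z‖ ≤ 1) :
    ‖Complex.cos z - (1 - z ^ 2 / 2)‖ ≤ ‖z‖ ^ 4 * (5 / 96) := by
  have hb1 : ‖Complex.exp (z * I) - ∑ m ∈ Finset.range 4, (z * I) ^ m / m.factorial‖
      ≤ ‖z * I‖ ^ 4 * ((5 : ℝ) * ((24 : ℝ) * 4)⁻¹) := by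
    have := Complex.exp_bound (x := z * I) (by simpa using hz) (n := 4) (by norm_num)
    simpa [Nat.factorial] using this
  have hb2 : ‖Complex.exp (-z * I) - ∑ m ∈ Finset.range 4, (-z * I) ^ m / m.factorial‖
      ≤ ‖-z * I‖ ^ 4 * ((5 : ℝ) * ((24 : ℝ) * 4)⁻¹) := by
    have := Complex.exp_bound (x := -z * I) (by simpa using hz) (n := 4) (by norm_num)
    simpa [Nat.factorial] using this
  have habs1 : ‖z * I‖ = ‖z‖ := by simp
  have habs2 : ‖-z * I‖ = ‖z‖ := by simp
  rw [habs1] at hb1; rw [habs2] at hb2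
  have hkey : Complex.cos z - (1 - z ^ 2 / 2) =
      ((Complex.exp (z * I) - ∑ m ∈ Finset.range 4, (z * I) ^ m / m.factorial)
        + (Complex.exp (-z * I) - ∑ m ∈ Finset.range 4, (-z * I) ^ m / m.factorial)) / 2 := by
    rw [Complex.cos]
    simp only [Finset.sum_range_succ, Finset.sum_range_zero, Nat.factorial]
    push_cast
    field_simp
    ring_nf
    simp [Complex.I_sq]
  rw [hkey]
  calc ‖(_ : ℂ) / 2‖
      = ‖(Complex.exp (z * I) - ∑ m ∈ Finset.range 4, (z * I) ^ m / m.factorial)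
        + (Complex.exp (-z * I) - ∑ m ∈ Finset.range 4, (-z * I) ^ m / m.factorial)‖ / 2 := by
        rw [norm_div]; simp
    _ ≤ (‖z‖ ^ 4 * ((5 : ℝ) * ((24 : ℝ) * 4)⁻¹)
        + ‖z‖ ^ 4 * ((5 : ℝ) * ((24 : ℝ) * 4)⁻¹)) / 2 := by
        gcongr
        exact (norm_add_le _ _).trans (add_le_add hb1 hb2)
    _ = ‖z‖ ^ 4 * (5 / 96) := by ring

lemma aux_tendsto_A : Tendsto (fun z : ℂ => Complex.sin z / z) (𝓝[≠] (0 : ℂ)) (𝓝 1) := by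
  have h := hasDerivAt_iff_tendsto_slope.1 (Complex.hasDerivAt_sin 0)
  rw [Complex.cos_zero] at h
  refine h.congr fun z => ?_
  simp [slope_def_field]

lemma aux_tendsto_abs : Tendsto (fun z : ℂ => ‖z‖) (𝓝[≠] (0 : ℂ)) (𝓝 0) := by
  have : Tendsto (fun z : ℂ => ‖z‖) (𝓝 (0 : ℂ)) (𝓝 0) := by
    simpa using continuous_norm.tendsto (0 : ℂ)
  exact this.mono_left nhdsWithin_le_nhds

lemma aux_eventually_small (r : ℝ) (hr : 0 < r) :
    ∀ᶠ z : ℂ in 𝓝[≠] (0 : ℂ), ‖z‖ < r ∧ z ≠ 0 := by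
  filter_upwards [aux_tendsto_abs.eventually (eventually_lt_nhds hr),
    eventually_mem_nhdsWithin] with z h1 h2
  exact ⟨h1, h2⟩

lemma aux_tendsto_B :
    Tendsto (fun z : ℂ => (Complex.sin z - z) / z ^ 3) (𝓝[≠] (0 : ℂ)) (𝓝 (-(1 / 6))) := by
  have h0 : Tendsto (fun z : ℂ => (Complex.sin z - z) / z ^ 3 + 1 / 6) (𝓝[≠] (0 : ℂ)) (𝓝 0) := by
    apply squeeze_zero_norm' (a := fun z : ℂ => ‖z‖ * (5 / 96))
    · filter_upwards [aux_eventually_small 1 one_pos] with z hz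
      obtain ⟨hz1, hz0⟩ := hz
      have hz3 : z ^ 3 ≠ 0 := pow_ne_zero _ hz0
      have heq : (Complex.sin z - z) / z ^ 3 + 1 / 6
          = (Complex.sin z - (z - z ^ 3 / 6)) / z ^ 3 := by
        field_simp
        ring
      rw [heq, norm_div]
      have hb := aux_sin_bound hz1.le
      have h3 : ‖z ^ 3‖ = ‖z‖ ^ 3 := by simp
      rw [h3]
      have hpos : 0 < ‖z‖ ^ 3 := pow_pos (norm_pos_iff.2 hz0) 3
      rw [div_le_iff₀ hpos]
      calc ‖Complex.sin z - (z - z ^ 3 / 6)‖ ≤ ‖z‖ ^ 4 * (5 / 96) := hb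
        _ = ‖z‖ * (5 / 96) * ‖z‖ ^ 3 := by ring
    · simpa using aux_tendsto_abs.mul_const (5 / 96 : ℝ)
  have hfin := h0.sub_const (1 / 6 : ℂ)
  simp only [add_sub_cancel_right, zero_sub] at hfin
  exact hfin

lemma aux_tendsto_C :
    Tendsto (fun z : ℂ => (Complex.cos z - 1) / z ^ 2) (𝓝[≠] (0 : ℂ)) (𝓝 (-(1 / 2))) := by
  have h0 : Tendsto (fun z : ℂ => (Complex.cos z - 1) / z ^ 2 + 1 / 2) (𝓝[≠] (0 : ℂ)) (𝓝 0) := by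
    apply squeeze_zero_norm' (a := fun z : ℂ => ‖z‖ ^ 2 * (5 / 96))
    · filter_upwards [aux_eventually_small 1 one_pos] with z hz
      obtain ⟨hz1, hz0⟩ := hz
      have hz2 : z ^ 2 ≠ 0 := pow_ne_zero _ hz0
      have heq : (Complex.cos z - 1) / z ^ 2 + 1 / 2
          = (Complex.cos z - (1 - z ^ 2 / 2)) / z ^ 2 := by
        field_simp
        ring
      rw [heq, norm_div]
      have hb := aux_cos_bound hz1.le
      have h2 : ‖z ^ 2‖ = ‖z‖ ^ 2 := by simp
      rw [h2]
      have hpos : 0 < ‖z‖ ^ 2 := pow_pos (norm_pos_iff.2 hz0) 2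
      rw [div_le_iff₀ hpos]
      calc ‖Complex.cos z - (1 - z ^ 2 / 2)‖ ≤ ‖z‖ ^ 4 * (5 / 96) := hb
        _ = ‖z‖ ^ 2 * (5 / 96) * ‖z‖ ^ 2 := by ring
    · have hsq : Tendsto (fun z : ℂ => ‖z‖ ^ 2) (𝓝[≠] (0 : ℂ)) (𝓝 0) := by
        have := aux_tendsto_abs.pow 2
        simpa using this
      simpa using hsq.mul_const (5 / 96 : ℝ)
  have hfin := h0.sub_const (1 / 2 : ℂ)
  simp only [add_sub_cancel_right, zero_sub] at hfin
  exact hfin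

/-- The map `z ↦ a * z` (with `a ≠ 0`) preserves the punctured neighborhood filter at 0. -/
lemma aux_tendsto_mul_punctured {a : ℂ} (ha : a ≠ 0) :
    Tendsto (fun z : ℂ => a * z) (𝓝[≠] (0 : ℂ)) (𝓝[≠] (0 : ℂ)) := by
  apply tendsto_nhdsWithin_of_tendsto_nhds_of_eventually_within
  · have : Tendsto (fun z : ℂ => a * z) (𝓝 (0 : ℂ)) (𝓝 (a * 0)) :=
      (continuous_const.mul continuous_id).tendsto 0
    simpa using this.mono_left nhdsWithin_le_nhds
  · filter_upwards [eventually_mem_nhdsWithin] with z hz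
    exact mul_ne_zero ha hz

set_option maxHeartbeats 1600000 in
/-- The key limit: `γ·f(γ) − (4β/π)/γ² → β/(3π) − 4π/(3β)` as `γ → 0`. -/
lemma aux_key_tendsto (β : ℝ) (hβ : 0 < β) :
    Tendsto (fun γ : ℂ =>
        γ * (Complex.cot ((Real.pi : ℂ) * γ / (β : ℂ)) / (Complex.sin (γ / 2)) ^ 2)
          - (4 * (β : ℂ) / (Real.pi : ℂ)) / γ ^ 2)
      (𝓝[≠] (0 : ℂ))
      (𝓝 ((β : ℂ) / (3 * (Real.pi : ℂ)) - 4 * (Real.pi : ℂ) / (3 * (β : ℂ)))) := by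
  have hπ : (Real.pi : ℂ) ≠ 0 := Complex.ofReal_ne_zero.2 Real.pi_ne_zero
  have hβ' : (β : ℂ) ≠ 0 := Complex.ofReal_ne_zero.2 hβ.ne'
  have ha : (Real.pi : ℂ) / (β : ℂ) ≠ 0 := div_ne_zero hπ hβ'
  have hmap1 : Tendsto (fun γ : ℂ => (Real.pi : ℂ) * γ / (β : ℂ)) (𝓝[≠] (0 : ℂ))
      (𝓝[≠] (0 : ℂ)) := by
    refine (aux_tendsto_mul_punctured ha).congr fun γ => ?_
    ring
  have hmap2 : Tendsto (fun γ : ℂ => γ / 2) (𝓝[≠] (0 : ℂ)) (𝓝[≠] (0 : ℂ)) := by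
    refine (aux_tendsto_mul_punctured (a := (2 : ℂ)⁻¹) (by norm_num)).congr fun γ => ?_
    ring
  have hev : ∀ᶠ γ : ℂ in 𝓝[≠] (0 : ℂ), γ ≠ 0 ∧ ((Real.pi : ℂ) * γ / (β : ℂ)) ≠ 0 := by
    filter_upwards [eventually_mem_nhdsWithin] with γ hγ
    exact ⟨hγ, div_ne_zero (mul_ne_zero hπ hγ) hβ'⟩
  -- blocks
  have hC1 : Tendsto (fun γ : ℂ => (Complex.cos ((Real.pi : ℂ) * γ / (β : ℂ)) - 1) / γ ^ 2)
      (𝓝[≠] (0 : ℂ)) (𝓝 (((Real.pi : ℂ) / (β : ℂ)) ^ 2 * (-(1 / 2)))) := by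
    refine (((aux_tendsto_C.comp hmap1).const_mul (((Real.pi : ℂ) / (β : ℂ)) ^ 2)).congr' ?_)
    filter_upwards [hev] with γ ⟨hγ0, hu0⟩
    simp only [Function.comp]
    rw [eq_div_iff (pow_ne_zero 2 hγ0)]
    field_simp
    try ring
  have hB1 : Tendsto (fun γ : ℂ =>
      (Complex.sin ((Real.pi : ℂ) * γ / (β : ℂ)) - (Real.pi : ℂ) * γ / (β : ℂ)) / γ ^ 3)
      (𝓝[≠] (0 : ℂ)) (𝓝 (((Real.pi : ℂ) / (β : ℂ)) ^ 3 * (-(1 / 6)))) := by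
    refine (((aux_tendsto_B.comp hmap1).const_mul (((Real.pi : ℂ) / (β : ℂ)) ^ 3)).congr' ?_)
    filter_upwards [hev] with γ ⟨hγ0, hu0⟩
    simp only [Function.comp]
    rw [eq_div_iff (pow_ne_zero 3 hγ0)]
    field_simp
    try ring
  have hS1 : Tendsto (fun γ : ℂ => Complex.sin ((Real.pi : ℂ) * γ / (β : ℂ)) / γ)
      (𝓝[≠] (0 : ℂ)) (𝓝 (((Real.pi : ℂ) / (β : ℂ)) * 1)) := by
    refine (((aux_tendsto_A.comp hmap1).const_mul ((Real.pi : ℂ) / (β : ℂ))).congr' ?_)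
    filter_upwards [hev] with γ ⟨hγ0, hu0⟩
    simp only [Function.comp]
    rw [eq_div_iff hγ0]
    field_simp
    try ring
  have hB2 : Tendsto (fun γ : ℂ => (Complex.sin (γ / 2) - γ / 2) / γ ^ 3)
      (𝓝[≠] (0 : ℂ)) (𝓝 ((1 / 8 : ℂ) * (-(1 / 6)))) := by
    refine (((aux_tendsto_B.comp hmap2).const_mul ((1 : ℂ) / 8)).congr' ?_)
    filter_upwards [hev] with γ ⟨hγ0, hu0⟩
    simp only [Function.comp]
    rw [eq_div_iff (pow_ne_zero 3 hγ0)]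
    field_simp
    try ring
  have hS2 : Tendsto (fun γ : ℂ => Complex.sin (γ / 2) / γ)
      (𝓝[≠] (0 : ℂ)) (𝓝 ((1 / 2 : ℂ) * 1)) := by
    refine (((aux_tendsto_A.comp hmap2).const_mul ((1 : ℂ) / 2)).congr' ?_)
    filter_upwards [hev] with γ ⟨hγ0, hu0⟩
    simp only [Function.comp]
    rw [eq_div_iff hγ0]
    field_simp
    try ring
  -- assemble the model function
  have hform : Tendsto (fun γ : ℂ => (4 * (β : ℂ) / (Real.pi : ℂ)) *
      (((Complex.cos ((Real.pi : ℂ) * γ / (β : ℂ)) - 1) / γ ^ 2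
        - ((Complex.sin ((Real.pi : ℂ) * γ / (β : ℂ)) - (Real.pi : ℂ) * γ / (β : ℂ)) / γ ^ 3)
            * ((β : ℂ) / (Real.pi : ℂ))
        - 2 * (Complex.sin ((Real.pi : ℂ) * γ / (β : ℂ)) / γ)
            * ((Complex.sin (γ / 2) - γ / 2) / γ ^ 3)
            * (2 * (Complex.sin (γ / 2) / γ) + 1) * ((β : ℂ) / (Real.pi : ℂ)))
      / ((Complex.sin ((Real.pi : ℂ) * γ / (β : ℂ)) / γ * ((β : ℂ) / (Real.pi : ℂ)))
          * (2 * (Complex.sin (γ / 2) / γ)) ^ 2)))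
      (𝓝[≠] (0 : ℂ))
      (𝓝 ((4 * (β : ℂ) / (Real.pi : ℂ)) *
        ((((Real.pi : ℂ) / (β : ℂ)) ^ 2 * (-(1 / 2))
          - (((Real.pi : ℂ) / (β : ℂ)) ^ 3 * (-(1 / 6))) * ((β : ℂ) / (Real.pi : ℂ))
          - 2 * (((Real.pi : ℂ) / (β : ℂ)) * 1) * ((1 / 8 : ℂ) * (-(1 / 6)))
              * (2 * ((1 / 2 : ℂ) * 1) + 1) * ((β : ℂ) / (Real.pi : ℂ)))
        / (((Real.pi : ℂ) / (β : ℂ)) * 1 * ((β : ℂ) / (Real.pi : ℂ))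
            * (2 * ((1 / 2 : ℂ) * 1)) ^ 2)))) := by
    apply Tendsto.const_mul
    apply Tendsto.div
    · exact (hC1.sub (hB1.mul_const _)).sub
        ((((tendsto_const_nhds.mul hS1).mul hB2).mul
          ((hS2.const_mul 2).add tendsto_const_nhds)).mul_const _)
    · exact (hS1.mul_const _).mul ((hS2.const_mul 2).pow 2)
    · field_simp
      exact one_ne_zero
  -- identify the limit value
  have hval : (4 * (β : ℂ) / (Real.pi : ℂ)) *
        ((((Real.pi : ℂ) / (β : ℂ)) ^ 2 * (-(1 / 2))
          - (((Real.pi : ℂ) / (β : ℂ)) ^ 3 * (-(1 / 6))) * ((β : ℂ) / (Real.pi : ℂ))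
          - 2 * (((Real.pi : ℂ) / (β : ℂ)) * 1) * ((1 / 8 : ℂ) * (-(1 / 6)))
              * (2 * ((1 / 2 : ℂ) * 1) + 1) * ((β : ℂ) / (Real.pi : ℂ)))
        / (((Real.pi : ℂ) / (β : ℂ)) * 1 * ((β : ℂ) / (Real.pi : ℂ))
            * (2 * ((1 / 2 : ℂ) * 1)) ^ 2)) =
      (β : ℂ) / (3 * (Real.pi : ℂ)) - 4 * (Real.pi : ℂ) / (3 * (β : ℂ)) := by
    field_simp
    ring_nf
  rw [hval] at hform
  -- conclude via eventual equality
  refine hform.congr' ?_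
  filter_upwards [aux_eventually_small (min β (2 * Real.pi))
      (lt_min hβ Real.two_pi_pos)] with γ hγ
  obtain ⟨hsmall, hγ0⟩ := hγ
  have habsβ : ‖γ‖ < β := lt_of_lt_of_le hsmall (min_le_left _ _)
  have habs2π : ‖γ‖ < 2 * Real.pi := lt_of_lt_of_le hsmall (min_le_right _ _)
  have hs1 : Complex.sin ((Real.pi : ℂ) * γ / (β : ℂ)) ≠ 0 := by
    apply aux_sin_ne_zero (div_ne_zero (mul_ne_zero hπ hγ0) hβ')
    have habs : ‖(Real.pi : ℂ) * γ / (β : ℂ)‖ = Real.pi * ‖γ‖ / β := by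
      rw [norm_div, norm_mul, Complex.norm_real, Complex.norm_real, Real.norm_eq_abs, Real.norm_eq_abs,
        abs_of_pos Real.pi_pos, abs_of_pos hβ]
    rw [habs, div_lt_iff₀ hβ]
    nlinarith [Real.pi_pos]
  have hs2 : Complex.sin (γ / 2) ≠ 0 := by
    apply aux_sin_ne_zero (div_ne_zero hγ0 two_ne_zero)
    have habs : ‖γ / 2‖ = ‖γ‖ / 2 := by rw [norm_div]; simp
    rw [habs]
    linarith
  -- the pointwise algebraic identity
  rw [Complex.cot_eq_cos_div_sin, eq_comm]
  have hA : (γ ^ 2 * ((β : ℂ) * γ ^ 3 * (Real.pi : ℂ))) ≠ 0 :=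
    mul_ne_zero (pow_ne_zero _ hγ0) (mul_ne_zero (mul_ne_zero hβ' (pow_ne_zero _ hγ0)) hπ)
  have hB : (γ * (2 * γ ^ 3) * γ * (Real.pi : ℂ)) ≠ 0 :=
    mul_ne_zero (mul_ne_zero (mul_ne_zero hγ0
      (mul_ne_zero two_ne_zero (pow_ne_zero _ hγ0))) hγ0) hπ
  have hs1'' : Complex.sin (γ * (Real.pi : ℂ) / (β : ℂ)) ≠ 0 := by
    rwa [mul_comm γ]
  field_simp
  ring

/-- For `β > 0` and `0 < δ < min(β, 2π)`, the integral of
`γ ↦ cot(πγ/β) / sin²(γ/2)` over the positively oriented circle of radius `δ`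
centered at `0` equals `2πi · (2/3) · (β/(2π) − 2π/β)`. -/
theorem circleIntegral_cot_div_sin_sq (β δ : ℝ) (hβ : 0 < β)
    (hδ : 0 < δ) (hδβ : δ < β) (hδ2π : δ < 2 * Real.pi) :
    (∮ γ in C(0, δ),
        Complex.cot ((Real.pi : ℂ) * γ / (β : ℂ)) / (Complex.sin (γ / 2)) ^ 2) =
      2 * (Real.pi : ℂ) * Complex.I * (2 / 3) *
        ((β : ℂ) / (2 * (Real.pi : ℂ)) - 2 * (Real.pi : ℂ) / (β : ℂ)) := by
  have hπ : (Real.pi : ℂ) ≠ 0 := Complex.ofReal_ne_zero.2 Real.pi_ne_zero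
  have hβ' : (β : ℂ) ≠ 0 := Complex.ofReal_ne_zero.2 hβ.ne'
  set f : ℂ → ℂ := fun γ =>
    Complex.cot ((Real.pi : ℂ) * γ / (β : ℂ)) / (Complex.sin (γ / 2)) ^ 2 with hf_def
  set c : ℂ := (β : ℂ) / (3 * (Real.pi : ℂ)) - 4 * (Real.pi : ℂ) / (3 * (β : ℂ)) with hc_def
  set H : ℂ → ℂ := fun γ => γ * f γ - (4 * (β : ℂ) / (Real.pi : ℂ)) / γ ^ 2 with hH_def
  -- differentiability of f away from 0 within radius δ
  have hdiff : ∀ γ : ℂ, γ ≠ 0 → ‖γ‖ ≤ δ → DifferentiableAt ℂ f γ := by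
    intro γ hγ0 hγδ
    have hs1 : Complex.sin ((Real.pi : ℂ) * γ / (β : ℂ)) ≠ 0 := by
      apply aux_sin_ne_zero (div_ne_zero (mul_ne_zero hπ hγ0) hβ')
      have habs : ‖(Real.pi : ℂ) * γ / (β : ℂ)‖ = Real.pi * ‖γ‖ / β := by
        rw [norm_div, norm_mul, Complex.norm_real, Complex.norm_real, Real.norm_eq_abs, Real.norm_eq_abs,
          abs_of_pos Real.pi_pos, abs_of_pos hβ]
      rw [habs, div_lt_iff₀ hβ]
      nlinarith [Real.pi_pos]
    have hs2 : Complex.sin (γ / 2) ≠ 0 := by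
      apply aux_sin_ne_zero (div_ne_zero hγ0 two_ne_zero)
      have habs : ‖γ / 2‖ = ‖γ‖ / 2 := by rw [norm_div]; simp
      rw [habs]
      linarith
    have harg : DifferentiableAt ℂ (fun γ : ℂ => (Real.pi : ℂ) * γ / (β : ℂ)) γ :=
      (differentiableAt_id.const_mul _).div_const _
    have hcot : DifferentiableAt ℂ
        (fun γ : ℂ => Complex.cot ((Real.pi : ℂ) * γ / (β : ℂ))) γ := by
      have heq : (fun γ : ℂ => Complex.cot ((Real.pi : ℂ) * γ / (β : ℂ))) =
          fun γ : ℂ => Complex.cos ((Real.pi : ℂ) * γ / (β : ℂ))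
            / Complex.sin ((Real.pi : ℂ) * γ / (β : ℂ)) := by
        funext x; rw [Complex.cot_eq_cos_div_sin]
      rw [heq]
      exact (Complex.differentiable_cos.differentiableAt.comp γ harg).div
        (Complex.differentiable_sin.differentiableAt.comp γ harg) hs1
    exact hcot.div
      ((Complex.differentiable_sin.differentiableAt.comp γ
        (differentiableAt_id.div_const _)).pow 2)
      (pow_ne_zero _ hs2)
  have hdiffH : ∀ γ : ℂ, γ ≠ 0 → ‖γ‖ ≤ δ → DifferentiableAt ℂ H γ := by
    intro γ hγ0 hγδ
    exact (differentiableAt_id.mul (hdiff γ hγ0 hγδ)).sub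
      ((differentiableAt_const _).div (differentiableAt_pow 2) (pow_ne_zero _ hγ0))
  -- Cauchy formula for the H part
  have hint2 : (∮ γ in C(0, δ), (γ - 0)⁻¹ • H γ) = (2 * ↑Real.pi * I : ℂ) • c := by
    apply Complex.circleIntegral_sub_center_inv_smul_of_differentiable_on_off_countable_of_tendsto
      hδ (countable_empty (α := ℂ))
    · intro γ hγ
      obtain ⟨hγ1, hγ2⟩ := hγ
      have hγ0 : γ ≠ 0 := by simpa using hγ2
      have hγδ : ‖γ‖ ≤ δ := by
        simpa [Complex.dist_eq] using mem_closedBall.1 hγ1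
      exact (hdiffH γ hγ0 hγδ).continuousAt.continuousWithinAt
    · intro γ hγ
      obtain ⟨⟨hγ1, hγ2⟩, -⟩ := hγ
      have hγ0 : γ ≠ 0 := by simpa using hγ2
      have hγδ : ‖γ‖ ≤ δ := by
        have := mem_ball.1 hγ1
        simp only [Complex.dist_eq, sub_zero] at this
        exact this.le
      exact hdiffH γ hγ0 hγδ
    · exact aux_key_tendsto β hβ
  -- the zpow part vanishes
  have hint1 : (∮ γ in C(0, δ), (4 * (β : ℂ) / (Real.pi : ℂ)) * (γ - 0) ^ (-3 : ℤ)) = 0 := by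
    rw [circleIntegral.integral_const_mul,
      circleIntegral.integral_sub_zpow_of_ne (by decide) 0 0 δ]
    ring
  -- integrability
  have hIf : CircleIntegrable f 0 δ := by
    apply ContinuousOn.circleIntegrable hδ.le
    intro γ hγ
    have hγδ : ‖γ‖ = δ := by
      simpa [Complex.dist_eq] using mem_sphere.1 hγ
    have hγ0 : γ ≠ 0 := by
      intro h; rw [h] at hγδ; simp at hγδ; exact hδ.ne hγδ
    exact (hdiff γ hγ0 hγδ.le).continuousAt.continuousWithinAt
  have hIg : CircleIntegrable
      (fun γ : ℂ => (4 * (β : ℂ) / (Real.pi : ℂ)) * (γ - 0) ^ (-3 : ℤ)) 0 δ := by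
    apply ContinuousOn.circleIntegrable hδ.le
    intro γ hγ
    have hγδ : ‖γ‖ = δ := by
      simpa [Complex.dist_eq] using mem_sphere.1 hγ
    have hγ0 : γ - 0 ≠ 0 := by
      simp only [sub_zero]
      intro h; rw [h] at hγδ; simp at hγδ; exact hδ.ne hγδ
    exact (continuousAt_const.mul
      ((continuousAt_id.sub continuousAt_const).zpow₀ _ (Or.inl hγ0))).continuousWithinAt
  -- decomposition on the sphere
  have hcongr : (∮ γ in C(0, δ), (f γ - (4 * (β : ℂ) / (Real.pi : ℂ)) * (γ - 0) ^ (-3 : ℤ))) =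
      (∮ γ in C(0, δ), (γ - 0)⁻¹ • H γ) := by
    apply circleIntegral.integral_congr hδ.le
    intro γ hγ
    have hγδ : ‖γ‖ = δ := by
      simpa [Complex.dist_eq] using mem_sphere.1 hγ
    have hγ0 : γ ≠ 0 := by
      intro h; rw [h] at hγδ; simp at hγδ; exact hδ.ne hγδ
    simp only [hH_def, sub_zero, smul_eq_mul]
    rw [zpow_neg]
    have h3 : (γ ^ (3 : ℤ)) = γ ^ (3 : ℕ) := by norm_cast
    rw [h3]
    field_simp
  have hsub := circleIntegral.integral_sub hIf hIg
  -- combine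
  have hmain : (∮ γ in C(0, δ), f γ) = (2 * ↑Real.pi * I : ℂ) • c := by
    have hstep : (∮ γ in C(0, δ), f γ)
        - (∮ γ in C(0, δ), (4 * (β : ℂ) / (Real.pi : ℂ)) * (γ - 0) ^ (-3 : ℤ))
        = (2 * ↑Real.pi * I : ℂ) • c := by
      rw [← hsub, hcongr, hint2]
    rw [hint1, sub_zero] at hstep
    exact hstep
  rw [hmain, smul_eq_mul, hc_def]
  field_simp
  ring
end

section
/- Let t > 0, let r ≥ 0 and ρ ≥ 0, let θ and ψ be real numbers, and let 0 < δ < 2π. Then (1/(16π² i t)) · e^{−(r²+ρ²)/(4t)} · ∮_{|α−ψ|=δ} exp( rρ cos(α−θ)/(2t) ) · cot( (α−ψ)/2 ) dα = (1/(4πt)) · exp( −( r² + ρ² − 2 r ρ cos(θ−ψ) )/(4t) ), where the contour is the positively oriented circle of radius δ centered at ψ in the complex α-plane. -/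
open Complex

/-- If `w ≠ 0` and `|w| < 2π` then `sin (w/2) ≠ 0`. -/
lemma sin_half_ne_zero {w : ℂ} (hw : w ≠ 0) (habs : ‖w‖ < 2 * Real.pi) :
    Complex.sin (w / 2) ≠ 0 := by
  intro h
  rcases Complex.sin_eq_zero_iff.1 h with ⟨k, hk⟩
  have hwk : w = 2 * (k : ℂ) * (Real.pi : ℂ) := by linear_combination 2 * hk
  have hk0 : k ≠ 0 := by
    rintro rfl
    exact hw (by simpa using hwk)
  have h1 : (1 : ℝ) ≤ |(k : ℝ)| := by
    have := Int.one_le_abs hk0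
    calc (1:ℝ) ≤ ((|k| : ℤ) : ℝ) := by exact_mod_cast this
    _ = |(k : ℝ)| := by push_cast; rfl
  have habs' : ‖w‖ = 2 * |(k : ℝ)| * Real.pi := by
    rw [hwk]
    simp [Complex.norm_intCast, Complex.norm_real,
      abs_of_pos Real.pi_pos]
  rw [habs'] at habs
  nlinarith [Real.pi_pos]

/-- `w * cot (w/2) → 2` as `w → 0` (within `w ≠ 0`). -/
lemma tendsto_mul_cot_half : Filter.Tendsto (fun w : ℂ => w * Complex.cot (w / 2))
    (nhdsWithin 0 {(0:ℂ)}ᶜ) (nhds 2) := by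
  have hslope : Filter.Tendsto (fun w : ℂ => Complex.sin w / w)
      (nhdsWithin 0 {(0:ℂ)}ᶜ) (nhds 1) := by
    have h := hasDerivAt_iff_tendsto_slope.mp (Complex.hasDerivAt_sin 0)
    rw [Complex.cos_zero] at h
    refine h.congr fun w => ?_
    simp [slope_def_field]
  have hinv : Filter.Tendsto (fun w : ℂ => (Complex.sin w / w)⁻¹)
      (nhdsWithin 0 {(0:ℂ)}ᶜ) (nhds 1) := by
    simpa using hslope.inv₀ one_ne_zero
  have hmap : Filter.Tendsto (fun w : ℂ => w / 2) (nhdsWithin 0 {(0:ℂ)}ᶜ)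
      (nhdsWithin 0 {(0:ℂ)}ᶜ) := by
    rw [tendsto_nhdsWithin_iff]
    constructor
    · have h1 : Filter.Tendsto (fun w : ℂ => w / 2) (nhds 0) (nhds ((0:ℂ) / 2)) :=
        (continuous_id.div_const 2).tendsto 0
      rw [show (0:ℂ)/2 = 0 by norm_num] at h1
      exact h1.mono_left nhdsWithin_le_nhds
    · filter_upwards [self_mem_nhdsWithin] with w hw
      simp only [Set.mem_compl_iff, Set.mem_singleton_iff] at *
      exact fun h => hw (by simpa [div_eq_zero_iff] using h)
  have hcos : Filter.Tendsto (fun w : ℂ => Complex.cos (w / 2))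
      (nhdsWithin 0 {(0:ℂ)}ᶜ) (nhds 1) := by
    have h1 : Filter.Tendsto (fun w : ℂ => Complex.cos (w / 2)) (nhds 0)
        (nhds (Complex.cos ((0:ℂ) / 2))) :=
      (Complex.continuous_cos.comp (continuous_id.div_const 2)).tendsto 0
    rw [show Complex.cos ((0:ℂ)/2) = 1 by norm_num] at h1
    exact h1.mono_left nhdsWithin_le_nhds
  have key : Filter.Tendsto
      (fun w : ℂ => (2 : ℂ) * Complex.cos (w / 2) * (Complex.sin (w / 2) / (w / 2))⁻¹)
      (nhdsWithin 0 {(0:ℂ)}ᶜ) (nhds 2) := by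
    have h2c : Filter.Tendsto (fun _ : ℂ => (2:ℂ)) (nhdsWithin 0 {(0:ℂ)}ᶜ) (nhds 2) :=
      tendsto_const_nhds
    have := (h2c.mul hcos).mul (hinv.comp hmap)
    simpa using this
  refine key.congr' ?_
  filter_upwards [self_mem_nhdsWithin] with w hw
  have hw0 : (w : ℂ) ≠ 0 := hw
  have hw2 : w / 2 ≠ 0 := by simpa [div_eq_zero_iff] using hw0
  rw [Complex.cot_eq_cos_div_sin]
  rcases eq_or_ne (Complex.sin (w / 2)) 0 with hs | hs
  · simp [hs, hw2]
  · field_simp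

/-- Carslaw's contour-integral representation of the planar heat kernel:
for `t > 0`, `r, ρ ≥ 0`, real `θ, ψ`, and `0 < δ < 2π`,
`(1/(16π²it)) e^{−(r²+ρ²)/(4t)} ∮_{|α−ψ|=δ} e^{rρcos(α−θ)/(2t)} cot((α−ψ)/2) dα
  = (1/(4πt)) e^{−(r²+ρ²−2rρcos(θ−ψ))/(4t)}`. -/
theorem heat_kernel_contour_representation (t r ρ θ ψ δ : ℝ)
    (ht : 0 < t) (hr : 0 ≤ r) (hρ : 0 ≤ ρ) (hδ : 0 < δ) (hδ2π : δ < 2 * Real.pi) :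
    (1 / (16 * (Real.pi : ℂ) ^ 2 * Complex.I * (t : ℂ))) *
        Complex.exp (-(((r : ℂ) ^ 2 + (ρ : ℂ) ^ 2) / (4 * (t : ℂ)))) *
        (∮ α in C((ψ : ℂ), δ),
          Complex.exp ((r : ℂ) * (ρ : ℂ) * Complex.cos (α - (θ : ℂ)) / (2 * (t : ℂ))) *
            Complex.cot ((α - (ψ : ℂ)) / 2)) =
      (1 / (4 * (Real.pi : ℂ) * (t : ℂ))) *
        Complex.exp (-(((r : ℂ) ^ 2 + (ρ : ℂ) ^ 2 -
          2 * (r : ℂ) * (ρ : ℂ) * Complex.cos ((θ : ℂ) - (ψ : ℂ))) / (4 * (t : ℂ)))) := by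
  set c : ℂ := (ψ : ℂ) with hc_def
  set E : ℂ → ℂ := fun z =>
    Complex.exp ((r : ℂ) * (ρ : ℂ) * Complex.cos (z - (θ : ℂ)) / (2 * (t : ℂ))) with hE_def
  have hEdiff : Differentiable ℂ E := by
    apply Differentiable.cexp
    exact (((differentiable_const _).mul
      (Complex.differentiable_cos.comp (differentiable_id.sub_const _))).div_const _)
  have hEcont : Continuous E := hEdiff.continuous
  set f : ℂ → ℂ := fun z => E z * ((z - c) * Complex.cot ((z - c) / 2)) with hf_def
  classical
  set F : ℂ → ℂ := Function.update f c (2 * E c) with hF_def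
  -- the limit of f at c
  have hlim : Filter.Tendsto f (nhdsWithin c {c}ᶜ) (nhds (2 * E c)) := by
    have hmap : Filter.Tendsto (fun z : ℂ => z - c) (nhdsWithin c {c}ᶜ)
        (nhdsWithin 0 {(0:ℂ)}ᶜ) := by
      rw [tendsto_nhdsWithin_iff]
      constructor
      · have h1 : Filter.Tendsto (fun z : ℂ => z - c) (nhds c) (nhds (c - c)) :=
          (continuous_id.sub continuous_const).tendsto c
        rw [sub_self] at h1
        exact h1.mono_left nhdsWithin_le_nhds
      · filter_upwards [self_mem_nhdsWithin] with z hz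
        simp only [Set.mem_compl_iff, Set.mem_singleton_iff] at *
        exact fun h => hz (by linear_combination h)
    have h1 : Filter.Tendsto (fun z : ℂ => (z - c) * Complex.cot ((z - c) / 2))
        (nhdsWithin c {c}ᶜ) (nhds 2) := tendsto_mul_cot_half.comp hmap
    have h2 : Filter.Tendsto E (nhdsWithin c {c}ᶜ) (nhds (E c)) :=
      (hEcont.tendsto c).mono_left nhdsWithin_le_nhds
    have h3 := h2.mul h1
    rw [mul_comm] at h3
    exact h3
  -- f is differentiable away from c (within the disk of radius 2π)
  have hfdiff : ∀ z : ℂ, z ≠ c → ‖z - c‖ < 2 * Real.pi →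
      DifferentiableAt ℂ f z := by
    intro z hzc habs
    apply DifferentiableAt.mul (hEdiff z)
    apply DifferentiableAt.mul ((differentiable_id.sub_const c) z)
    have heq : (fun w : ℂ => Complex.cot ((w - c) / 2)) =
        fun w : ℂ => Complex.cos ((w - c) / 2) / Complex.sin ((w - c) / 2) :=
      funext fun w => Complex.cot_eq_cos_div_sin _
    rw [heq]
    have hsz : Complex.sin ((z - c) / 2) ≠ 0 :=
      sin_half_ne_zero (sub_ne_zero.2 hzc) habs
    exact DifferentiableAt.div
      ((Complex.differentiable_cos.comp ((differentiable_id.sub_const c).div_const 2)) z)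
      ((Complex.differentiable_sin.comp ((differentiable_id.sub_const c).div_const 2)) z) hsz
  -- F agrees with f away from c
  have hFf : ∀ z : ℂ, z ≠ c → F z = f z := fun z hz => Function.update_of_ne hz _ _
  -- continuity of F on the closed ball
  have hFcont : ContinuousOn F (Metric.closedBall c δ) := by
    intro z hz
    apply ContinuousAt.continuousWithinAt
    rcases eq_or_ne z c with rfl | hzc
    · exact continuousAt_update_same.2 hlim
    · have hev : f =ᶠ[nhds z] F := by
        filter_upwards [IsOpen.mem_nhds isOpen_compl_singleton hzc] with w hw
        exact (hFf w hw).symm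
      have habs : ‖z - c‖ < 2 * Real.pi := by
        have h1 := Metric.mem_closedBall.1 hz
        rw [Complex.dist_eq] at h1
        exact lt_of_le_of_lt h1 hδ2π
      exact ((hfdiff z hzc habs).continuousAt).congr hev
  -- differentiability of F on the ball minus {c}
  have hFdiff : ∀ z ∈ Metric.ball c δ \ {c}, DifferentiableAt ℂ F z := by
    rintro z ⟨hz, hzc⟩
    simp only [Set.mem_singleton_iff] at hzc
    have habs : ‖z - c‖ < 2 * Real.pi := by
      have h1 := Metric.mem_ball.1 hz
      rw [Complex.dist_eq] at h1
      exact lt_trans h1 hδ2π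
    have hev : f =ᶠ[nhds z] F := by
      filter_upwards [IsOpen.mem_nhds isOpen_compl_singleton hzc] with w hw
      exact (hFf w hw).symm
    exact (hfdiff z hzc habs).congr_of_eventuallyEq hev.symm
  -- Cauchy integral formula
  have hcauchy : (∮ z in C(c, δ), (z - c)⁻¹ • F z) = (2 * Real.pi * Complex.I : ℂ) • F c :=
    Complex.circleIntegral_sub_inv_smul_of_differentiable_on_off_countable
      (Set.countable_singleton c) (Metric.mem_ball_self hδ) hFcont hFdiff
  -- the integrand equals (z-c)⁻¹ • F z on the circle
  have hint : (∮ α in C((ψ : ℂ), δ),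
      Complex.exp ((r : ℂ) * (ρ : ℂ) * Complex.cos (α - (θ : ℂ)) / (2 * (t : ℂ))) *
        Complex.cot ((α - (ψ : ℂ)) / 2)) = (2 * Real.pi * Complex.I : ℂ) • F c := by
    rw [← hcauchy]
    apply circleIntegral.integral_congr hδ.le
    intro z hz
    have hzc : z ≠ c := by
      intro h
      have h2 := Metric.mem_sphere.1 hz
      rw [hc_def] at h
      rw [h, dist_self] at h2
      exact hδ.ne h2
    have hz0 : z - c ≠ 0 := sub_ne_zero.2 hzc
    simp only [smul_eq_mul]
    rw [hFf z hzc]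
    simp only [hf_def, hE_def, hc_def]
    rw [hc_def] at hz0
    field_simp
  rw [hint, hF_def, Function.update_self, smul_eq_mul]
  have hπ : (Real.pi : ℂ) ≠ 0 := by exact_mod_cast Real.pi_ne_zero
  have htc : (t : ℂ) ≠ 0 := by exact_mod_cast ht.ne'
  have hEc : E c = Complex.exp ((r : ℂ) * (ρ : ℂ) * Complex.cos ((θ : ℂ) - (ψ : ℂ)) /
      (2 * (t : ℂ))) := by
    rw [hE_def, hc_def]
    simp only
    congr 2
    rw [show (ψ : ℂ) - (θ : ℂ) = -((θ : ℂ) - (ψ : ℂ)) by ring, Complex.cos_neg]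
  rw [hEc]
  have key : ∀ X Y : ℂ,
      (1 / (16 * (Real.pi : ℂ) ^ 2 * Complex.I * (t : ℂ))) * Complex.exp X *
        (2 * (Real.pi : ℂ) * Complex.I * (2 * Complex.exp Y)) =
      (1 / (4 * (Real.pi : ℂ) * (t : ℂ))) * Complex.exp (X + Y) := by
    intro X Y
    have h16 : (16 * (Real.pi : ℂ) ^ 2 * Complex.I * (t : ℂ)) ≠ 0 := by
      simp [hπ, htc, Complex.I_ne_zero]
    have h4 : (4 * (Real.pi : ℂ) * (t : ℂ)) ≠ 0 := by simp [hπ, htc]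
    rw [Complex.exp_add]
    rw [show (1 / (16 * (Real.pi : ℂ) ^ 2 * Complex.I * (t : ℂ))) * Complex.exp X *
        (2 * (Real.pi : ℂ) * Complex.I * (2 * Complex.exp Y)) =
        ((2 * (Real.pi : ℂ) * Complex.I * 2) / (16 * (Real.pi : ℂ) ^ 2 * Complex.I * (t : ℂ))) *
          (Complex.exp X * Complex.exp Y) from by ring]
    congr 1
    rw [div_eq_div_iff h16 h4]
    ring
  rw [key]
  have h2t : (2 * (t : ℂ)) ≠ 0 := by simp [htc]
  have h4t : (4 * (t : ℂ)) ≠ 0 := by simp [htc]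
  congr 1
  rw [show (r : ℂ) * (ρ : ℂ) * Complex.cos ((θ : ℂ) - (ψ : ℂ)) / (2 * (t : ℂ)) =
      2 * (r : ℂ) * (ρ : ℂ) * Complex.cos ((θ : ℂ) - (ψ : ℂ)) / (4 * (t : ℂ)) from by
    rw [div_eq_div_iff h2t h4t]; ring]
  rw [← neg_div, ← neg_div, ← add_div]
  congr 1
  ring
end

section
/- Let (λ_k) be a sequence of strictly positive reals whose counting function satisfies #{k : λ_k ≤ T} ≤ C·T for all T ≥ 1, and set θ(t) := Σ_k e^{−λ_k t} (the series converges for every t > 0). Suppose there exist c₀, c₁ ∈ ℝ and C′, ε > 0 such that |1 + θ(t) − c₀/t − c₁| ≤ C′ e^{−ε/t} for all 0 < t ≤ 1. Then there exists a holomorphic function Z on ℂ ∖ {1} such that Z(s) = Σ_k λ_k^{−s} for every s with Re s > 1, and Z(0) = c₁ − 1. -/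
open Complex


private lemma summable_of_binned (f : ℕ → ℝ) (hf : ∀ k, 0 ≤ f k) (n : ℕ → ℕ) (g B : ℕ → ℝ)
    (hg0 : ∀ m, 0 ≤ g m) (hfg : ∀ k, f k ≤ g (n k))
    (hfin : ∀ m : ℕ, ∃ h : Set.Finite {k | n k = m}, (h.toFinset.card : ℝ) ≤ B m)
    (hB : Summable (fun m => B m * g m)) : Summable f := by
  refine summable_of_sum_le hf (c := ∑' m, B m * g m) (fun u => ?_)
  have hB0 : ∀ m, 0 ≤ B m := fun m => by
    obtain ⟨h, hc⟩ := hfin m; exact le_trans (Nat.cast_nonneg _) hc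
  calc ∑ k ∈ u, f k ≤ ∑ k ∈ u, g (n k) := Finset.sum_le_sum fun k _ => hfg k
    _ = ∑ m ∈ u.image n, (u.filter fun k => n k = m).card • g m := Finset.sum_comp g n
    _ ≤ ∑ m ∈ u.image n, B m * g m := by
        refine Finset.sum_le_sum fun m _ => ?_
        rw [nsmul_eq_mul]
        obtain ⟨h, hc⟩ := hfin m
        refine mul_le_mul_of_nonneg_right (le_trans ?_ hc) (hg0 m)
        have hsub : (u.filter fun k => n k = m) ⊆ h.toFinset := fun k hk => by
          simp only [Set.Finite.mem_toFinset, Set.mem_setOf_eq]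
          exact (Finset.mem_filter.mp hk).2
        exact_mod_cast Finset.card_le_card hsub
    _ ≤ ∑' m, B m * g m := Summable.sum_le_tsum _ (fun m _ => mul_nonneg (hB0 m) (hg0 m)) hB

section
variable (lam : ℕ → ℝ) (hpos : ∀ k, 0 < lam k) (C : ℝ) (hC : 0 < C)
    (hcount : ∀ T : ℝ, 1 ≤ T → ∃ h : Set.Finite {k | lam k ≤ T},
      (h.toFinset.card : ℝ) ≤ C * T)

include hpos hcount in
private lemma summable_exp_aux : ∀ t : ℝ, 0 < t → Summable fun k => Real.exp (-lam k * t) := by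
  intro t ht
  refine summable_of_binned _ (fun k => (Real.exp_pos _).le) (fun k => ⌊lam k⌋₊)
    (fun m => Real.exp (-(m : ℝ) * t)) (fun m => C * ((m : ℝ) + 1))
    (fun m => (Real.exp_pos _).le) (fun k => ?_) (fun m => ?_) ?_
  · exact Real.exp_le_exp.mpr (by nlinarith [Nat.floor_le (hpos k).le])
  · obtain ⟨hS, hcard⟩ := hcount ((m : ℝ) + 1) (by simp [Nat.cast_nonneg])
    have hsub : {k | ⌊lam k⌋₊ = m} ⊆ {k | lam k ≤ (m : ℝ) + 1} := fun k hk => by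
      have h2 := Nat.lt_floor_add_one (lam k)
      simp only [Set.mem_setOf_eq] at hk ⊢
      rw [hk] at h2
      exact h2.le
    refine ⟨hS.subset hsub, le_trans ?_ hcard⟩
    have hss : (hS.subset hsub).toFinset ⊆ hS.toFinset := by
      intro k hk
      simp only [Set.Finite.mem_toFinset] at hk ⊢
      exact hsub hk
    exact_mod_cast Finset.card_le_card hss
  · have hr1 : ‖Real.exp (-t)‖ < 1 := by
      rw [Real.norm_eq_abs, abs_of_pos (Real.exp_pos _)]
      exact Real.exp_lt_one_iff.mpr (by linarith)
    have h1 : Summable fun m : ℕ => (m : ℝ) * Real.exp (-t) ^ m := by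
      simpa using summable_pow_mul_geometric_of_norm_lt_one 1 hr1
    have h2 : Summable fun m : ℕ => Real.exp (-t) ^ m :=
      summable_geometric_of_lt_one (Real.exp_pos _).le (by rwa [Real.norm_eq_abs,
        abs_of_pos (Real.exp_pos _)] at hr1)
    refine (((h1.add h2).mul_left C)).congr fun m => ?_
    show C * ((m : ℝ) * Real.exp (-t) ^ m + Real.exp (-t) ^ m)
      = C * ((m : ℝ) + 1) * Real.exp (-(m : ℝ) * t)
    rw [show -(m : ℝ) * t = (m : ℕ) * (-t) by push_cast; ring, Real.exp_nat_mul]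
    ring

include hpos hcount in
private lemma summable_rpow_aux : ∀ σ : ℝ, 1 < σ → Summable fun k => lam k ^ (-σ) := by
  intro σ hσ
  obtain ⟨hS1, -⟩ := hcount 1 le_rfl
  have hmain : Summable fun k => if lam k ≤ 1 then 0 else lam k ^ (-σ) := by
    refine summable_of_binned _
      (fun k => by
        by_cases h : lam k ≤ 1
        · simp [h]
        · simp only [if_neg h]; exact Real.rpow_nonneg (hpos k).le _)
      (fun k => Nat.log 2 ⌊lam k⌋₊)
      (fun m => ((2 : ℝ) ^ m) ^ (-σ)) (fun m => C * 2 ^ (m + 1))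
      (fun m => by positivity) (fun k => ?_) (fun m => ?_) ?_
    · by_cases hk : lam k ≤ 1
      · rw [if_pos hk]; positivity
      · rw [if_neg hk]
        push_neg at hk
        have hfl : 1 ≤ ⌊lam k⌋₊ := (Nat.one_le_floor_iff _).mpr hk.le
        have h2 : (2 : ℕ) ^ Nat.log 2 ⌊lam k⌋₊ ≤ ⌊lam k⌋₊ :=
          Nat.pow_log_le_self 2 (by omega)
        have h3 : ((2 : ℝ) ^ Nat.log 2 ⌊lam k⌋₊ : ℝ) ≤ lam k := by
          calc ((2 : ℝ) ^ Nat.log 2 ⌊lam k⌋₊ : ℝ) ≤ (⌊lam k⌋₊ : ℝ) := by exact_mod_cast h2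
            _ ≤ lam k := Nat.floor_le (by linarith)
        exact Real.rpow_le_rpow_of_nonpos (by positivity) h3 (by linarith)
    · obtain ⟨hS, hcard⟩ := hcount ((2 : ℝ) ^ (m + 1)) (one_le_pow₀ one_le_two)
      have hsub : {k | Nat.log 2 ⌊lam k⌋₊ = m} ⊆ {k | lam k ≤ (2 : ℝ) ^ (m + 1)} := by
        intro k hk
        simp only [Set.mem_setOf_eq] at hk ⊢
        by_cases hk1 : lam k ≤ 1
        · exact le_trans hk1 (one_le_pow₀ one_le_two)
        · push_neg at hk1
          have h2 : ⌊lam k⌋₊ < 2 ^ (m + 1) := by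
            have := Nat.lt_pow_succ_log_self (one_lt_two) ⌊lam k⌋₊
            rwa [hk] at this
          have h3 : lam k < (⌊lam k⌋₊ : ℝ) + 1 := Nat.lt_floor_add_one _
          have h4 : (⌊lam k⌋₊ : ℝ) + 1 ≤ ((2 : ℕ) ^ (m + 1) : ℕ) := by exact_mod_cast h2
          calc lam k ≤ (⌊lam k⌋₊ : ℝ) + 1 := h3.le
            _ ≤ ((2 : ℕ) ^ (m + 1) : ℕ) := h4
            _ = (2 : ℝ) ^ (m + 1) := by push_cast; ring
      refine ⟨hS.subset hsub, le_trans ?_ hcard⟩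
      have hss : (hS.subset hsub).toFinset ⊆ hS.toFinset := by
        intro k hk
        simp only [Set.Finite.mem_toFinset] at hk ⊢
        exact hsub hk
      exact_mod_cast Finset.card_le_card hss
    · have hr0 : (0 : ℝ) ≤ (2 : ℝ) ^ ((1 : ℝ) - σ) := Real.rpow_nonneg (by norm_num) _
      have hr1 : (2 : ℝ) ^ ((1 : ℝ) - σ) < 1 :=
        Real.rpow_lt_one_of_one_lt_of_neg one_lt_two (by linarith)
      refine ((summable_geometric_of_lt_one hr0 hr1).mul_left (2 * C)).congr fun m => ?_
      show 2 * C * ((2 : ℝ) ^ ((1 : ℝ) - σ)) ^ m = C * 2 ^ (m + 1) * ((2 : ℝ) ^ m) ^ (-σ)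
      rw [← Real.rpow_natCast ((2 : ℝ) ^ ((1 : ℝ) - σ)) m, ← Real.rpow_mul (by norm_num),
        ← Real.rpow_natCast (2 : ℝ) m, ← Real.rpow_mul (by norm_num),
        ← Real.rpow_natCast (2 : ℝ) (m + 1)]
      rw [show (2 : ℝ) * C = C * (2 : ℝ) ^ (1 : ℝ) by rw [Real.rpow_one]; ring,
        mul_assoc, mul_assoc, ← Real.rpow_add two_pos, ← Real.rpow_add two_pos]
      push_cast
      ring_nf
  have hrest : Summable fun k => if lam k ≤ 1 then lam k ^ (-σ) else 0 :=
    summable_of_ne_finset_zero (s := hS1.toFinset) fun k hk => by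
      have hnle : ¬ lam k ≤ 1 := fun hle => hk (hS1.mem_toFinset.mpr hle)
      rw [if_neg hnle]
  refine (hmain.add hrest).congr fun k => ?_
  by_cases h : lam k ≤ 1 <;> simp [h]
end

private lemma mellin_sub' {f g : ℝ → ℂ} {s : ℂ} (hf : MellinConvergent f s)
    (hg : MellinConvergent g s) :
    MellinConvergent (fun t => f t - g t) s ∧
      mellin (fun t => f t - g t) s = mellin f s - mellin g s := by
  have he : (fun t : ℝ => (t : ℂ) ^ (s - 1) • (f t - g t))
      = fun t : ℝ => (t : ℂ) ^ (s - 1) • f t - (t : ℂ) ^ (s - 1) • g t := by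
    funext t; rw [smul_sub]
  constructor
  · rw [MellinConvergent, he]; exact hf.sub hg
  · rw [mellin, mellin, mellin, he, MeasureTheory.integral_sub hf hg]

/-- If `(λ_k)` has at most linearly growing counting function and the heat
trace `1 + θ(t)`, `θ(t) = Σ_k e^{−λ_k t}`, satisfies
`1 + θ(t) = c₀/t + c₁ + O(e^{−ε/t})` as `t → 0+`, then the zeta function
`Σ_k λ_k^{−s}` extends holomorphically to `ℂ ∖ {1}` with value `c₁ − 1` at `0`. -/
theorem zeta_extension_value_at_zero (lam : ℕ → ℝ) (hpos : ∀ k, 0 < lam k)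
    (C : ℝ) (hC : 0 < C)
    (hcount : ∀ T : ℝ, 1 ≤ T → ∃ h : Set.Finite {k | lam k ≤ T},
      (h.toFinset.card : ℝ) ≤ C * T)
    (c₀ c₁ C' ε : ℝ) (hC' : 0 < C') (hε : 0 < ε)
    (htrace : ∀ t : ℝ, 0 < t → t ≤ 1 →
      |1 + (∑' k, Real.exp (-(lam k) * t)) - c₀ / t - c₁| ≤ C' * Real.exp (-ε / t)) :
    ∃ Z : ℂ → ℂ, DifferentiableOn ℂ Z {(1 : ℂ)}ᶜ ∧
      (∀ s : ℂ, 1 < s.re → Z s = ∑' k, (lam k : ℂ) ^ (-s)) ∧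
      Z 0 = (c₁ : ℂ) - 1 := by
  have hsum := summable_exp_aux lam hpos C hcount
  have hpow := summable_rpow_aux lam hpos C hcount
  -- the heat trace and related functions
  set θr : ℝ → ℝ := fun t => ∑' k, Real.exp (-lam k * t) with hθr
  set F : ℝ → ℂ := fun t => ((θr t : ℝ) : ℂ) with hFdef
  set ind1 : ℝ → ℂ := Set.indicator (Set.Ioc 0 1) (fun t : ℝ => ((t : ℂ))⁻¹) with hind1def
  set ind0 : ℝ → ℂ := Set.indicator (Set.Ioc 0 1) (fun _ : ℝ => (1 : ℂ)) with hind0def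
  set g : ℝ → ℂ := fun t => F t - (c₀ : ℂ) • ind1 t - ((c₁ : ℂ) - 1) • ind0 t with hgdef
  have hθ0 : ∀ t, 0 ≤ θr t := fun t => tsum_nonneg fun k => (Real.exp_pos _).le
  -- a positive lower bound for the eigenvalues
  obtain ⟨δ, hδpos, hδle⟩ : ∃ δ : ℝ, 0 < δ ∧ ∀ k, δ ≤ lam k := by
    obtain ⟨hS1, -⟩ := hcount 1 le_rfl
    set t1 : Finset ℝ := insert (1 : ℝ) (hS1.toFinset.image lam) with ht1
    have ht1ne : t1.Nonempty := ⟨1, Finset.mem_insert_self _ _⟩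
    refine ⟨t1.min' ht1ne, ?_, ?_⟩
    · have hmem := t1.min'_mem ht1ne
      have hmem2 : t1.min' ht1ne = 1 ∨ t1.min' ht1ne ∈ hS1.toFinset.image lam :=
        Finset.mem_insert.mp hmem
      rcases hmem2 with h | h
      · rw [h]; norm_num
      · obtain ⟨k, -, hk⟩ := Finset.mem_image.mp h
        rw [← hk]; exact hpos k
    · intro k
      by_cases hk : lam k ≤ 1
      · exact t1.min'_le _ (Finset.mem_insert_of_mem
          (Finset.mem_image_of_mem lam (hS1.mem_toFinset.mpr hk)))
      · exact le_trans (t1.min'_le 1 (Finset.mem_insert_self _ _)) (not_le.mp hk).le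
  -- decay of the heat trace at infinity
  have hθtop : ∀ t : ℝ, 1 ≤ t → θr t ≤ Real.exp (-δ * (t - 1)) * θr 1 := by
    intro t htge
    have h1 : ∀ k, Real.exp (-lam k * t) ≤ Real.exp (-δ * (t - 1)) * Real.exp (-lam k * 1) := by
      intro k
      rw [← Real.exp_add]
      apply Real.exp_le_exp.mpr
      nlinarith [hδle k]
    calc θr t ≤ ∑' k, Real.exp (-δ * (t - 1)) * Real.exp (-lam k * 1) :=
          Summable.tsum_le_tsum h1 (hsum t (by linarith)) ((hsum 1 one_pos).mul_left _)
      _ = Real.exp (-δ * (t - 1)) * θr 1 := tsum_mul_left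
  -- continuity of F on (0, ∞)
  have hcont : ContinuousOn F (Set.Ioi 0) := by
    apply continuousOn_of_forall_continuousAt
    intro x hx
    have hx0 : (0 : ℝ) < x := hx
    have h2 : ContinuousOn θr (Set.Ici (x / 2)) := by
      refine TendstoUniformlyOn.continuousOn
        (tendstoUniformlyOn_tsum (hsum (x / 2) (by linarith)) ?_)
        (Filter.Eventually.of_forall fun N => ?_).frequently
      · intro k y hy
        have hy' : x / 2 ≤ y := hy
        rw [Real.norm_eq_abs, _root_.abs_of_pos (Real.exp_pos _)]
        refine Real.exp_le_exp.mpr ?_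
        nlinarith [mul_nonneg (hpos k).le (by linarith : (0:ℝ) ≤ y - x / 2)]
      · exact (Continuous.continuousOn (by continuity))
    have h3 : ContinuousAt θr x := h2.continuousAt (Ici_mem_nhds (by linarith))
    exact Complex.continuous_ofReal.continuousAt.comp h3
  -- bounds for g
  have hFtop : F =O[Filter.atTop] fun t => Real.exp (-δ * t) := by
    rw [Asymptotics.isBigO_iff]
    refine ⟨Real.exp δ * θr 1, ?_⟩
    filter_upwards [Filter.eventually_ge_atTop 1] with t htge
    rw [hFdef]
    simp only [Complex.norm_real]
    rw [Real.norm_eq_abs, Real.norm_eq_abs, _root_.abs_of_nonneg (hθ0 t),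
      _root_.abs_of_pos (Real.exp_pos _)]
    calc θr t ≤ Real.exp (-δ * (t - 1)) * θr 1 := hθtop t htge
      _ = Real.exp δ * θr 1 * Real.exp (-δ * t) := by
          rw [show -δ * (t - 1) = δ + -δ * t by ring, Real.exp_add]; ring
  have hgF : ∀ᶠ t in Filter.atTop, g t = F t := by
    filter_upwards [Filter.eventually_gt_atTop 1] with t htgt
    have h1 : t ∉ Set.Ioc (0 : ℝ) 1 := fun hmem => absurd hmem.2 (not_le.mpr htgt)
    rw [hgdef]
    simp only [hind1def, hind0def, Set.indicator_of_notMem h1, smul_zero, sub_zero]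
  have hgtop : g =O[Filter.atTop] fun t => Real.exp (-δ * t) :=
    hFtop.congr' (Filter.EventuallyEq.symm (hgF : g =ᶠ[Filter.atTop] F)) Filter.EventuallyEq.rfl
  -- the exponential bound at 0 dominates every power
  have hexp_bound : ∀ b : ℝ, ∀ᶠ t : ℝ in nhdsWithin 0 (Set.Ioi 0),
      Real.exp (-ε / t) ≤ t ^ (-b) := by
    intro b
    have h0 := tendsto_rpow_mul_exp_neg_mul_atTop_nhds_zero (-b) ε hε
    have h1 : ∀ᶠ u : ℝ in Filter.atTop, u ^ (-b) * Real.exp (-ε * u) < 1 :=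
      h0.eventually_lt_const one_pos
    have h2 := (tendsto_inv_nhdsGT_zero (𝕜 := ℝ)).eventually h1
    filter_upwards [h2, self_mem_nhdsWithin] with t hlt htmem
    have htpos : (0 : ℝ) < t := htmem
    rw [Real.inv_rpow htpos.le] at hlt
    have hA : (0 : ℝ) < t ^ (-b) := Real.rpow_pos_of_pos htpos _
    have h3 := mul_lt_mul_of_pos_left hlt hA
    rw [← mul_assoc, mul_inv_cancel₀ hA.ne', one_mul, mul_one] at h3
    rw [div_eq_mul_inv]
    exact h3.le
  have hgsmall : ∀ᶠ t : ℝ in nhdsWithin 0 (Set.Ioi 0), ‖g t‖ ≤ C' * Real.exp (-ε / t) := by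
    filter_upwards [Ioc_mem_nhdsGT one_pos] with t htIoc
    have ht0 : (0 : ℝ) < t := htIoc.1
    have hi1 : ind1 t = ((t : ℂ))⁻¹ := by rw [hind1def, Set.indicator_of_mem htIoc]
    have hi0 : ind0 t = 1 := by rw [hind0def, Set.indicator_of_mem htIoc]
    have hgt : g t = (((θr t - c₀ * t⁻¹ - (c₁ - 1)) : ℝ) : ℂ) := by
      rw [hgdef]
      show F t - (c₀ : ℂ) • ind1 t - ((c₁ : ℂ) - 1) • ind0 t = _
      rw [hi1, hi0, hFdef]
      simp only [smul_eq_mul, mul_one]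
      push_cast
      ring
    rw [hgt, Complex.norm_real, Real.norm_eq_abs]
    have harg : θr t - c₀ * t⁻¹ - (c₁ - 1) = 1 + θr t - c₀ / t - c₁ := by
      rw [div_eq_mul_inv]; ring
    rw [harg]
    exact htrace t ht0 htIoc.2
  have hgbot : ∀ b : ℝ, g =O[nhdsWithin 0 (Set.Ioi 0)] fun t : ℝ => t ^ (-b) := by
    intro b
    rw [Asymptotics.isBigO_iff]
    refine ⟨C', ?_⟩
    filter_upwards [hgsmall, hexp_bound b, self_mem_nhdsWithin] with t h1 h2 htmem
    have ht0 : (0 : ℝ) < t := htmem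
    have hA : (0 : ℝ) ≤ t ^ (-b) := Real.rpow_nonneg ht0.le _
    rw [Real.norm_eq_abs, _root_.abs_of_nonneg hA]
    exact le_trans h1 (mul_le_mul_of_nonneg_left h2 hC'.le)
  -- F is O(t⁻¹) at 0
  have hFbot : F =O[nhdsWithin 0 (Set.Ioi 0)] fun t : ℝ => t ^ (-(1 : ℝ)) := by
    rw [Asymptotics.isBigO_iff]
    refine ⟨C' + |c₀| + |c₁| + 1, ?_⟩
    filter_upwards [Ioc_mem_nhdsGT one_pos] with t htIoc
    have ht0 : (0 : ℝ) < t := htIoc.1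
    have hti : (1 : ℝ) ≤ t⁻¹ := by
      nlinarith [mul_nonneg (inv_pos.mpr ht0).le (by linarith [htIoc.2] : (0:ℝ) ≤ 1 - t),
        mul_inv_cancel₀ ht0.ne']
    have habs2 := (abs_le.mp (htrace t ht0 htIoc.2)).2
    have hexple : Real.exp (-ε / t) ≤ 1 := by
      rw [show (1 : ℝ) = Real.exp 0 by rw [Real.exp_zero]]
      exact Real.exp_le_exp.mpr (div_nonpos_of_nonpos_of_nonneg (by linarith) ht0.le)
    have hd : c₀ / t ≤ |c₀| * t⁻¹ := by
      rw [div_eq_mul_inv]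
      exact mul_le_mul_of_nonneg_right (le_abs_self c₀) (inv_pos.mpr ht0).le
    have hCe : C' * Real.exp (-ε / t) ≤ C' * t⁻¹ :=
      mul_le_mul_of_nonneg_left (hexple.trans hti) hC'.le
    have hc1 : c₁ ≤ |c₁| * t⁻¹ :=
      le_trans (le_abs_self c₁) (le_mul_of_one_le_right (abs_nonneg _) hti)
    rw [hFdef]
    simp only [Complex.norm_real]
    rw [Real.norm_eq_abs, Real.norm_eq_abs, _root_.abs_of_nonneg (hθ0 t), Real.rpow_neg_one,
      _root_.abs_of_pos (inv_pos.mpr ht0)]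
    nlinarith [habs2, hd, hCe, hc1, hti]
  -- local integrability of g on (0, ∞)
  have hm1 : Measurable ind1 := by
    rw [hind1def]
    exact (Complex.measurable_ofReal.inv).indicator measurableSet_Ioc
  have hm0 : Measurable ind0 := by
    rw [hind0def]
    exact measurable_const.indicator measurableSet_Ioc
  have hloc : MeasureTheory.LocallyIntegrableOn g (Set.Ioi 0) := by
    rw [MeasureTheory.locallyIntegrableOn_iff isOpen_Ioi.isLocallyClosed]
    intro K hK hKc
    have hFK : MeasureTheory.IntegrableOn F K :=
      (hcont.locallyIntegrableOn measurableSet_Ioi).integrableOn_compact_subset hK hKc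
    have hcont_inv : ContinuousOn (fun t : ℝ => ((t : ℂ))⁻¹) (Set.Ioi 0) :=
      ContinuousOn.inv₀ Complex.continuous_ofReal.continuousOn
        (fun t ht => ofReal_ne_zero.mpr (ne_of_gt ht))
    have hinvK : MeasureTheory.IntegrableOn (fun t : ℝ => ((t : ℂ))⁻¹) K :=
      (hcont_inv.locallyIntegrableOn measurableSet_Ioi).integrableOn_compact_subset hK hKc
    have h1K : MeasureTheory.IntegrableOn ind1 K := by
      refine MeasureTheory.Integrable.mono hinvK hm1.aestronglyMeasurable
        (MeasureTheory.ae_of_all _ fun t => ?_)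
      rw [hind1def]
      exact norm_indicator_le_norm_self _ _
    have h0K : MeasureTheory.IntegrableOn ind0 K := by
      have hcK : MeasureTheory.IntegrableOn (fun _ : ℝ => (1 : ℂ)) K :=
        MeasureTheory.integrableOn_const hKc.measure_lt_top.ne
      refine MeasureTheory.Integrable.mono hcK hm0.aestronglyMeasurable
        (MeasureTheory.ae_of_all _ fun t => ?_)
      rw [hind0def]
      refine le_trans (norm_indicator_le_norm_self _ _) (by norm_num)
    rw [hgdef]
    simp only [smul_eq_mul]
    exact (hFK.sub (h1K.const_mul _)).sub (h0K.const_mul _)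
  -- the Mellin transform of g is entire
  have hdiff : ∀ s : ℂ, DifferentiableAt ℂ (mellin g) s := fun s =>
    mellin_differentiableAt_of_isBigO_rpow_exp hδpos hloc hgtop (hgbot (s.re - 1))
      (by linarith [lt_add_one s.re])
  clear_value θr F ind1 ind0 g
  -- the candidate function
  refine ⟨fun s => mellin g s * (Complex.Gamma s)⁻¹
      + (c₀ : ℂ) * ((s - 1)⁻¹ * (Complex.Gamma s)⁻¹)
      + ((c₁ : ℂ) - 1) * (Complex.Gamma (s + 1))⁻¹, ?_, ?_, ?_⟩
  · -- differentiability on ℂ \ {1}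
    intro s hs
    have hs1 : s ≠ 1 := hs
    refine DifferentiableAt.differentiableWithinAt ?_
    have d1 : DifferentiableAt ℂ (fun s : ℂ => mellin g s * (Complex.Gamma s)⁻¹) s :=
      (hdiff s).mul (Complex.differentiable_one_div_Gamma s)
    have d2 : DifferentiableAt ℂ (fun s : ℂ => (c₀ : ℂ) * ((s - 1)⁻¹ * (Complex.Gamma s)⁻¹)) s := by
      refine (differentiableAt_const _).mul (DifferentiableAt.mul ?_
        (Complex.differentiable_one_div_Gamma s))
      exact (differentiableAt_id.sub (differentiableAt_const 1)).inv (sub_ne_zero.mpr hs1)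
    have d3 : DifferentiableAt ℂ (fun s : ℂ => ((c₁ : ℂ) - 1) * (Complex.Gamma (s + 1))⁻¹) s := by
      have h3 : DifferentiableAt ℂ ((fun z : ℂ => (Complex.Gamma z)⁻¹) ∘ (fun s : ℂ => s + 1)) s :=
        DifferentiableAt.comp s (Complex.differentiable_one_div_Gamma (s + 1))
          (differentiableAt_id.add (differentiableAt_const (1 : ℂ)))
      exact (differentiableAt_const _).mul h3
    exact (d1.add d2).add d3
  · -- value for re s > 1
    intro s hs
    have hs0 : s ≠ 0 := by intro h; rw [h, zero_re] at hs; linarith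
    have hs1 : s ≠ 1 := by intro h; rw [h, one_re] at hs; linarith
    have hsm1 : s + -1 ≠ 0 := by
      intro h
      have : s = 1 := by linear_combination h
      exact hs1 this
    have hΓ : Complex.Gamma s ≠ 0 := Complex.Gamma_ne_zero_of_re_pos (by linarith)
    have hΓ1 : Complex.Gamma (s + 1) = s * Complex.Gamma s := Complex.Gamma_add_one s hs0
    -- Mellin transform of F equals Γ(s) ζ(s)
    have hmellinF : mellin F s = Complex.Gamma s * ∑' k, (lam k : ℂ) ^ (-s) := by
      have hF : ∀ t ∈ Set.Ioi (0 : ℝ), HasSum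
          (fun i => (1 : ℂ) * (Real.exp (-lam i * t) : ℝ)) (F t) := by
        intro t ht
        simp only [one_mul, hFdef, hθr]
        exact Complex.hasSum_ofReal.mpr (hsum t ht).hasSum
      have h_sum : Summable fun i => ‖(1 : ℂ)‖ / lam i ^ s.re := by
        refine (hpow s.re hs).congr fun k => ?_
        rw [norm_one, Real.rpow_neg (hpos k).le, one_div]
      have HS := hasSum_mellin (fun i => Or.inr (hpos i)) (by linarith : 0 < s.re) hF h_sum
      have h1 := HS.tsum_eq
      rw [← h1, ← tsum_mul_left]
      refine tsum_congr fun k => ?_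
      rw [Complex.cpow_neg, mul_one, div_eq_mul_inv]
    -- Mellin transforms of the indicator pieces
    have hM1 : HasMellin ind1 s (1 / (s + -1)) := by
      have h := hasMellin_cpow_Ioc (-1) (s := s) (by simp only [neg_re, one_re]; linarith)
      have hfeq : Set.indicator (Set.Ioc (0:ℝ) 1) (fun t : ℝ => (t : ℂ) ^ (-1 : ℂ)) = ind1 := by
        rw [hind1def]
        funext t
        by_cases ht : t ∈ Set.Ioc (0 : ℝ) 1
        · rw [Set.indicator_of_mem ht, Set.indicator_of_mem ht,
            show (-1 : ℂ) = -(1 : ℂ) by norm_num, Complex.cpow_neg, Complex.cpow_one]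
        · rw [Set.indicator_of_notMem ht, Set.indicator_of_notMem ht]
      rwa [hfeq] at h
    have hM0 : HasMellin ind0 s (1 / s) := by
      have h := hasMellin_one_Ioc (s := s) (by linarith : 0 < s.re)
      rwa [← hind0def] at h
    -- Mellin convergence of F
    have hFconv : MellinConvergent F s :=
      mellinConvergent_of_isBigO_rpow_exp hδpos (hcont.locallyIntegrableOn measurableSet_Ioi)
        hFtop hFbot (by linarith : (1 : ℝ) < s.re)
    have hsub1 := mellin_sub' hFconv (hM1.1.const_smul ((c₀ : ℂ)))
    have hsub2 := mellin_sub' hsub1.1 (hM0.1.const_smul (((c₁ : ℂ) - 1)))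
    have hmg : mellin g s = mellin F s - (c₀ : ℂ) * (1 / (s + -1)) - ((c₁ : ℂ) - 1) * (1 / s) := by
      have e2 := hsub2.2
      have e1 := hsub1.2
      have em1 : mellin (fun t => (c₀ : ℂ) • ind1 t) s = (c₀ : ℂ) * (1 / (s + -1)) := by
        rw [mellin_const_smul, hM1.2, smul_eq_mul]
      have em0 : mellin (fun t => ((c₁ : ℂ) - 1) • ind0 t) s = ((c₁ : ℂ) - 1) * (1 / s) := by
        rw [mellin_const_smul, hM0.2, smul_eq_mul]
      calc mellin g s
          = mellin (fun t => F t - (c₀ : ℂ) • ind1 t) s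
            - mellin (fun t => ((c₁ : ℂ) - 1) • ind0 t) s := by rw [hgdef]; exact e2
        _ = mellin F s - mellin (fun t => (c₀ : ℂ) • ind1 t) s
            - mellin (fun t => ((c₁ : ℂ) - 1) • ind0 t) s := by rw [e1]
        _ = mellin F s - (c₀ : ℂ) * (1 / (s + -1)) - ((c₁ : ℂ) - 1) * (1 / s) := by
            rw [em1, em0]
    show mellin g s * (Complex.Gamma s)⁻¹ + (c₀ : ℂ) * ((s - 1)⁻¹ * (Complex.Gamma s)⁻¹)
      + ((c₁ : ℂ) - 1) * (Complex.Gamma (s + 1))⁻¹ = ∑' k, (lam k : ℂ) ^ (-s)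
    rw [hmg, hmellinF, hΓ1, show s + -1 = s - 1 from (sub_eq_add_neg s 1).symm,
      mul_inv, one_div, one_div]
    have hc : Complex.Gamma s * (Complex.Gamma s)⁻¹ = 1 := mul_inv_cancel₀ hΓ
    linear_combination (∑' k, (lam k : ℂ) ^ (-s)) * hc
  · -- value at 0
    simp only [Complex.Gamma_zero, inv_zero, mul_zero, zero_add, zero_mul, add_zero,
      Complex.Gamma_one, inv_one, mul_one]
end

section
/- Let (λ_k) be a sequence of strictly positive reals whose counting function satisfies #{k : λ_k ≤ T} ≤ C·T for all T ≥ 1. Then for every complex s with Re s > 1, the series Σ_k λ_k^{−s} and, for each t > 0, the series Σ_k e^{−λ_k t} converge absolutely, the function t ↦ (Σ_k e^{−λ_k t}) t^{s−1} is integrable on (0, ∞), and Γ(s) · Σ_k λ_k^{−s} = ∫₀^∞ ( Σ_k e^{−λ_k t} ) t^{s−1} dt. -/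
open MeasureTheory Complex

private lemma exp_neg_le_four_div_sq {y : ℝ} (hy : 0 < y) : Real.exp (-y) ≤ 4 / y ^ 2 := by
  have h := Real.add_one_le_exp (y / 2)
  have h1 : y ^ 2 / 4 ≤ Real.exp y := by
    have h2 : (y / 2) ^ 2 ≤ Real.exp (y / 2) ^ 2 := by nlinarith [Real.exp_pos (y / 2)]
    calc y ^ 2 / 4 = (y / 2) ^ 2 := by ring
      _ ≤ Real.exp (y / 2) ^ 2 := h2
      _ = Real.exp y := by rw [sq, ← Real.exp_add]; norm_num
  rw [Real.exp_neg, show (4 : ℝ) / y ^ 2 = (y ^ 2 / 4)⁻¹ by field_simp]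
  exact inv_anti₀ (by positivity) h1

private lemma summable_of_counting (lam : ℕ → ℝ) (hpos : ∀ k, 0 < lam k) {C : ℝ}
    (hcount : ∀ T : ℝ, 1 ≤ T → ∃ h : Set.Finite {k | lam k ≤ T},
      (h.toFinset.card : ℝ) ≤ C * T)
    (f : ℝ → ℝ) (hf0 : ∀ x, 0 < x → 0 ≤ f x)
    (hanti : ∀ x y : ℝ, 1 ≤ x → x ≤ y → f y ≤ f x)
    (hgeo : Summable fun n : ℕ => C * 2 ^ (n + 1) * f (2 ^ n)) :
    Summable fun k => f (lam k) := by
  classical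
  obtain ⟨h1, -⟩ := hcount 1 le_rfl
  set M : ℝ := ∑ k ∈ h1.toFinset, f (lam k) with hM
  set T : ℝ := ∑' n : ℕ, C * 2 ^ (n + 1) * f (2 ^ n) with hT
  have hgeo0 : ∀ n : ℕ, 0 ≤ C * 2 ^ (n + 1) * f ((2 : ℝ) ^ n) := by
    intro n
    by_cases hc : 0 ≤ C * 2 ^ (n + 1)
    · exact mul_nonneg hc (hf0 _ (by positivity))
    ·
      -- if all counts are ≤ C*T; counts are ≥ 0 so C*T ≥ 0, and T > 0 gives C ≥ 0.
      exfalso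
      apply hc
      have h2 : (0:ℝ) ≤ C * 1 := le_trans (by positivity) (hcount 1 le_rfl).choose_spec
      nlinarith [pow_pos (by norm_num : (0:ℝ) < 2) (n+1)]
  apply summable_of_sum_le (c := M + T) (fun k => hf0 _ (hpos k))
  intro u
  rw [← Finset.sum_filter_add_sum_filter_not u (fun k => lam k ≤ 1)]
  have hpart1 : ∑ k ∈ u.filter (fun k => lam k ≤ 1), f (lam k) ≤ M := by
    apply Finset.sum_le_sum_of_subset_of_nonneg
    · intro k hk
      exact h1.mem_toFinset.mpr (Finset.mem_filter.mp hk).2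
    · intro k _ _
      exact hf0 _ (hpos k)
  have hpart2 : ∑ k ∈ u.filter (fun k => ¬ lam k ≤ 1), f (lam k) ≤ T := by
    set v := u.filter (fun k => ¬ lam k ≤ 1) with hv
    have hv1 : ∀ k ∈ v, 1 < lam k := fun k hk => not_le.mp (Finset.mem_filter.mp hk).2
    set g : ℕ → ℕ := fun k => Nat.log 2 ⌊lam k⌋₊ with hg
    have key : ∀ n ∈ Finset.image g v,
        ∑ k ∈ v.filter (fun k => g k = n), f (lam k) ≤ C * 2 ^ (n + 1) * f (2 ^ n) := by
      intro n _
      have h2n : (1 : ℝ) ≤ 2 ^ (n + 1) := one_le_pow₀ (by norm_num)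
      obtain ⟨hfin, hcard⟩ := hcount (2 ^ (n + 1)) h2n
      have hsub : v.filter (fun k => g k = n) ⊆ hfin.toFinset := by
        intro k hk
        obtain ⟨hkv, hkn⟩ := Finset.mem_filter.mp hk
        refine hfin.mem_toFinset.mpr ?_
        show lam k ≤ 2 ^ (n + 1)
        have hkn' : Nat.log 2 ⌊lam k⌋₊ = n := hkn
        have hfl : ⌊lam k⌋₊ < 2 ^ (n + 1) := by
          have h5 := Nat.lt_pow_succ_log_self (by norm_num : 1 < 2) ⌊lam k⌋₊
          rw [hkn'] at h5
          simpa using h5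
        have h2 : (⌊lam k⌋₊ : ℝ) + 1 ≤ 2 ^ (n + 1) := by
          have : ⌊lam k⌋₊ + 1 ≤ 2 ^ (n + 1) := hfl
          exact_mod_cast this
        linarith [Nat.lt_floor_add_one (lam k)]
      have hle : ∀ k ∈ v.filter (fun k => g k = n), f (lam k) ≤ f (2 ^ n) := by
        intro k hk
        obtain ⟨hkv, hkn⟩ := Finset.mem_filter.mp hk
        refine hanti _ _ (one_le_pow₀ (by norm_num)) ?_
        have hfl1 : 1 ≤ ⌊lam k⌋₊ := Nat.le_floor (by exact_mod_cast (hv1 k hkv).le)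
        have hkn' : Nat.log 2 ⌊lam k⌋₊ = n := hkn
        have hp := Nat.pow_log_le_self 2 (by omega : ⌊lam k⌋₊ ≠ 0)
        rw [hkn'] at hp
        calc (2 : ℝ) ^ n ≤ (⌊lam k⌋₊ : ℝ) := by exact_mod_cast hp
          _ ≤ lam k := Nat.floor_le (hpos k).le
      calc ∑ k ∈ v.filter (fun k => g k = n), f (lam k)
          ≤ (v.filter (fun k => g k = n)).card • f (2 ^ n) :=
            Finset.sum_le_card_nsmul _ _ _ hle
        _ = ((v.filter (fun k => g k = n)).card : ℝ) * f (2 ^ n) := nsmul_eq_mul _ _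
        _ ≤ (C * 2 ^ (n + 1)) * f (2 ^ n) := by
            refine mul_le_mul_of_nonneg_right ?_ (hf0 _ (by positivity))
            calc ((v.filter (fun k => g k = n)).card : ℝ)
                ≤ (hfin.toFinset.card : ℝ) := by
                  exact_mod_cast Finset.card_le_card hsub
              _ ≤ C * 2 ^ (n + 1) := hcard
    calc ∑ k ∈ v, f (lam k)
        = ∑ n ∈ v.image g, ∑ k ∈ v.filter (fun k => g k = n), f (lam k) :=
          (Finset.sum_fiberwise_of_maps_to (fun k hk => Finset.mem_image_of_mem g hk) _).symm
      _ ≤ ∑ n ∈ v.image g, C * 2 ^ (n + 1) * f (2 ^ n) := Finset.sum_le_sum key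
      _ ≤ T := Summable.sum_le_tsum _ (fun n _ => hgeo0 n) hgeo
  linarith

private lemma integrable_tsum_of_norm {α : Type*} [MeasurableSpace α] {μ : Measure α}
    {F : ℕ → α → ℂ} (hmeas : ∀ i, AEStronglyMeasurable (F i) μ)
    (hint : ∀ i, Integrable (F i) μ)
    (hsum : Summable fun i => ∫ a, ‖F i a‖ ∂μ) :
    Integrable (fun a => ∑' i, F i a) μ := by
  have hf'' : ∀ i, AEMeasurable (fun x => (‖F i x‖₊ : ENNReal)) μ := fun i => (hmeas i).aemeasurable.nnnorm.coe_nnreal_ennreal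
  have hfin : ∑' i, ∫⁻ a, ‖F i a‖₊ ∂μ ≠ ⊤ := by
    have hkey : ∀ i, ∫⁻ a, ‖F i a‖₊ ∂μ = ENNReal.ofReal (∫ a, ‖F i a‖ ∂μ) := fun i =>
      (ofReal_integral_norm_eq_lintegral_enorm (hint i)).symm
    rw [funext hkey, ← ENNReal.ofReal_tsum_of_nonneg
      (fun i => integral_nonneg fun a => norm_nonneg _) hsum]
    exact ENNReal.ofReal_ne_top
  have hlt : ∫⁻ a, ∑' i, (‖F i a‖₊ : ENNReal) ∂μ ≠ ⊤ := by
    rw [lintegral_tsum hf'']; exact hfin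
  have hae : ∀ᵐ a ∂μ, Summable fun n => ‖F n a‖ := by
    refine (ae_lt_top' (AEMeasurable.ennreal_tsum hf'') hlt).mono fun a ha => ?_
    have := ENNReal.tsum_coe_ne_top_iff_summable_coe.mp ha.ne
    simpa [coe_nnnorm] using this
  have hmeas_tsum : AEStronglyMeasurable (fun a => ∑' i, F i a) μ := by
    refine aestronglyMeasurable_of_tendsto_ae (Filter.atTop : Filter (Finset ℕ))
      (fun s => s.aestronglyMeasurable_sum fun i _ => hmeas i) ?_
    filter_upwards [hae] with a ha
    have := ha.of_norm.hasSum; simp only [Finset.sum_apply]; exact this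
  refine ⟨hmeas_tsum, ?_⟩
  have hb : ∫⁻ a, ‖∑' i, F i a‖₊ ∂μ ≤ ∫⁻ a, ∑' i, (‖F i a‖₊ : ENNReal) ∂μ := by
    refine lintegral_mono_ae (hae.mono fun a ha => ?_)
    have hs : Summable fun i => ‖F i a‖₊ := by
      rwa [← NNReal.summable_coe]
    calc (‖∑' i, F i a‖₊ : ENNReal)
        ≤ ((∑' i, ‖F i a‖₊ : NNReal) : ENNReal) := ENNReal.coe_le_coe.2 (nnnorm_tsum_le hs)
      _ = ∑' i, (‖F i a‖₊ : ENNReal) := ENNReal.coe_tsum hs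
  exact lt_of_le_of_lt hb (lt_top_iff_ne_top.2 hlt)

set_option maxHeartbeats 1000000 in
/-- Mellin representation of the operator zeta function: if the counting
function of the positive sequence `(λ_k)` grows at most linearly, then for
`Re s > 1` the series `Σ_k λ_k^{−s}` and, for each `t > 0`, `Σ_k e^{−λ_k t}`
converge absolutely, `t ↦ (Σ_k e^{−λ_k t}) t^{s−1}` is integrable on `(0,∞)`,
and `Γ(s) Σ_k λ_k^{−s} = ∫₀^∞ (Σ_k e^{−λ_k t}) t^{s−1} dt`. -/
theorem gamma_mul_zeta_eq_mellin_of_heat_trace (lam : ℕ → ℝ)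
    (hpos : ∀ k, 0 < lam k) (C : ℝ) (hC : 0 < C)
    (hcount : ∀ T : ℝ, 1 ≤ T → ∃ h : Set.Finite {k | lam k ≤ T},
      (h.toFinset.card : ℝ) ≤ C * T) :
    ∀ s : ℂ, 1 < s.re →
      Summable (fun k => ‖(lam k : ℂ) ^ (-s)‖) ∧
      (∀ t : ℝ, 0 < t → Summable (fun k => |Real.exp (-(lam k) * t)|)) ∧
      IntegrableOn
        (fun t : ℝ => ((∑' k, Real.exp (-(lam k) * t) : ℝ) : ℂ) * (t : ℂ) ^ (s - 1))
        (Set.Ioi 0) ∧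
      Complex.Gamma s * ∑' k, (lam k : ℂ) ^ (-s) =
        ∫ t in Set.Ioi (0 : ℝ),
          ((∑' k, Real.exp (-(lam k) * t) : ℝ) : ℂ) * (t : ℂ) ^ (s - 1) := by
  intro s hs
  have hs0 : 0 < s.re := by linarith
  -- (a) summability of the Dirichlet series
  have ha : Summable fun k => (lam k) ^ (-s.re) := by
    refine summable_of_counting lam hpos hcount (fun x => x ^ (-s.re)) (fun x hx => Real.rpow_nonneg hx.le _)
      (fun x y hx hxy => Real.rpow_le_rpow_of_nonpos (lt_of_lt_of_le one_pos hx) hxy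
        (by linarith)) ?_
    have hr0 : (0 : ℝ) ≤ 2 ^ (1 - s.re) := Real.rpow_nonneg (by norm_num) _
    have hr1 : (2 : ℝ) ^ (1 - s.re) < 1 :=
      Real.rpow_lt_one_of_one_lt_of_neg one_lt_two (by linarith)
    refine Summable.congr ((summable_geometric_of_lt_one hr0 hr1).mul_left (C * 2)) fun n => ?_
    have e1 : ((2 : ℝ) ^ (1 - s.re)) ^ n = (2 : ℝ) ^ ((1 - s.re) * n) := by
      rw [← Real.rpow_natCast ((2 : ℝ) ^ (1 - s.re)) n, ← Real.rpow_mul (by norm_num)]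
    have e2 : (((2 : ℝ) ^ n : ℝ)) ^ (-s.re) = (2 : ℝ) ^ ((n : ℝ) * (-s.re)) := by
      rw [← Real.rpow_natCast (2 : ℝ) n, ← Real.rpow_mul (by norm_num)]
    have e3 : ((2 : ℝ) ^ (n + 1) : ℝ) = (2 : ℝ) ^ (((n : ℕ) : ℝ) + 1) := by
      rw [← Real.rpow_natCast (2 : ℝ) (n + 1)]
      push_cast
      ring_nf
    show C * 2 * ((2 : ℝ) ^ (1 - s.re)) ^ n = C * 2 ^ (n + 1) * ((2 : ℝ) ^ n) ^ (-s.re)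
    rw [e1, e2, e3,
      show C * 2 * (2 : ℝ) ^ ((1 - s.re) * n) =
        C * ((2 : ℝ) ^ (1 : ℝ) * (2 : ℝ) ^ ((1 - s.re) * (n : ℝ))) by
          rw [Real.rpow_one]; ring,
      ← Real.rpow_add (by norm_num), mul_assoc, ← Real.rpow_add (by norm_num)]
    congr 1
    ring
  -- (b) summability of heat traces
  have hb : ∀ t : ℝ, 0 < t → Summable fun k => Real.exp (-(lam k) * t) := by
    intro t ht
    refine summable_of_counting lam hpos hcount (fun x => Real.exp (-x * t)) (fun x _ => (Real.exp_pos _).le)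
      (fun x y hx hxy => Real.exp_le_exp.mpr (by nlinarith)) ?_
    refine Summable.of_nonneg_of_le (fun n => ?_) (fun n => ?_)
      ((summable_geometric_of_lt_one (by norm_num) (by norm_num : (1 / 2 : ℝ) < 1)).mul_left
        (8 * C / t ^ 2))
    · positivity
    · have hyp : (0 : ℝ) < 2 ^ n * t := by positivity
      have hexp : Real.exp (-(2 : ℝ) ^ n * t) ≤ 4 / ((2 : ℝ) ^ n * t) ^ 2 := by
        rw [neg_mul]; exact exp_neg_le_four_div_sq hyp
      calc C * 2 ^ (n + 1) * Real.exp (-(2 : ℝ) ^ n * t)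
          ≤ C * 2 ^ (n + 1) * (4 / ((2 : ℝ) ^ n * t) ^ 2) := by
            refine mul_le_mul_of_nonneg_left hexp (by positivity)
        _ = 8 * C / t ^ 2 * (1 / 2) ^ n := by
            rw [div_pow, one_pow]
            field_simp
            ring
  -- the terms of the Mellin integrand series
  set G : ℕ → ℝ → ℂ := fun i t => (t : ℂ) ^ (s - 1) * ((Real.exp (-(lam i) * t) : ℝ) : ℂ)
    with hGdef
  have hmeasG : ∀ i, AEStronglyMeasurable (G i) (volume.restrict (Set.Ioi 0)) := by
    intro i
    have hc : ContinuousOn (fun t : ℝ => (t : ℂ) ^ (s - 1)) (Set.Ioi 0) := by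
      intro t ht
      exact (Complex.continuous_ofReal.continuousAt.cpow continuousAt_const
        (Or.inl (by simpa using ht))).continuousWithinAt
    exact (hc.aestronglyMeasurable measurableSet_Ioi).mul
      ((by fun_prop : Continuous fun t : ℝ =>
        ((Real.exp (-(lam i) * t) : ℝ) : ℂ)).aestronglyMeasurable)
  have hintG : ∀ i, Integrable (G i) (volume.restrict (Set.Ioi 0)) := by
    intro i
    have h0 := Complex.GammaIntegral_convergent hs0
    rw [← mul_zero (lam i), ← integrableOn_Ioi_comp_mul_left_iff _ _ (hpos i)] at h0
    have hne : ((lam i : ℂ)) ^ (s - 1) ≠ 0 := by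
      rw [Ne, Complex.cpow_eq_zero_iff, not_and_or]
      exact Or.inl (Complex.ofReal_ne_zero.mpr (hpos i).ne')
    refine (IntegrableOn.congr_fun (h0.const_mul ((((lam i : ℂ)) ^ (s - 1))⁻¹))
      (fun t ht => ?_) measurableSet_Ioi)
    have ht' : (0 : ℝ) < t := ht
    rw [Complex.ofReal_mul, mul_cpow_ofReal_nonneg (hpos i).le ht'.le]
    simp only [hGdef, neg_mul]
    field_simp
  have hnormG : ∀ i, ∀ t ∈ Set.Ioi (0 : ℝ),
      ‖G i t‖ = t ^ (s.re - 1) * Real.exp (-(lam i * t)) := by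
    intro i t ht
    have ht' : (0 : ℝ) < t := ht
    simp only [hGdef]
    rw [norm_mul, Complex.norm_cpow_eq_rpow_re_of_pos ht',
      Complex.norm_real, Real.norm_eq_abs, Real.abs_exp, sub_re, one_re, neg_mul]
  have hsumG : Summable fun i => ∫ t in Set.Ioi (0 : ℝ), ‖G i t‖ := by
    refine Summable.congr (ha.mul_left (Real.Gamma s.re)) fun i => ?_
    have hval : ∫ t in Set.Ioi (0 : ℝ), ‖G i t‖ = (1 / lam i) ^ s.re * Real.Gamma s.re := by
      rw [setIntegral_congr_fun measurableSet_Ioi (hnormG i)]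
      exact Real.integral_rpow_mul_exp_neg_mul_Ioi hs0 (hpos i)
    rw [hval, one_div, Real.inv_rpow (hpos i).le, ← Real.rpow_neg (hpos i).le, mul_comm]
  have hInt : IntegrableOn
      (fun t : ℝ => ((∑' k, Real.exp (-(lam k) * t) : ℝ) : ℂ) * (t : ℂ) ^ (s - 1))
      (Set.Ioi 0) := by
    have h0 := integrable_tsum_of_norm hmeasG hintG hsumG
    refine h0.congr ?_
    filter_upwards [ae_restrict_mem measurableSet_Ioi] with t ht
    simp only [hGdef]
    rw [tsum_mul_left, ← Complex.ofReal_tsum, mul_comm]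
  refine ⟨?_, fun t ht => Summable.congr (hb t ht) (fun k => (Real.abs_exp _).symm), hInt, ?_⟩
  · exact Summable.congr ha fun k => by
      rw [Complex.norm_cpow_eq_rpow_re_of_pos (hpos k), neg_re]
  · have hsum_norm : Summable fun i => ‖(1 : ℂ)‖ / (lam i) ^ s.re := by
      refine Summable.congr ha fun i => ?_
      rw [norm_one, Real.rpow_neg (hpos i).le, one_div]
    have hF : ∀ t ∈ Set.Ioi (0 : ℝ), HasSum (fun i => (1 : ℂ) * Real.exp (-(lam i) * t))
        (((∑' k, Real.exp (-(lam k) * t) : ℝ) : ℂ)) := by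
      intro t ht
      have h2 := Complex.hasSum_ofReal.mpr (hb t ht).hasSum
      simpa using h2
    have hmell := hasSum_mellin (a := fun _ : ℕ => (1 : ℂ)) (p := lam)
      (F := fun t => ((∑' k, Real.exp (-(lam k) * t) : ℝ) : ℂ))
      (fun i => Or.inr (hpos i)) hs0 hF hsum_norm
    calc Complex.Gamma s * ∑' k, (lam k : ℂ) ^ (-s)
        = ∑' k, Complex.Gamma s * (lam k : ℂ) ^ (-s) := tsum_mul_left.symm
      _ = ∑' k, Complex.Gamma s * 1 / (lam k : ℂ) ^ s := by
          refine tsum_congr fun k => ?_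
          rw [Complex.cpow_neg, mul_one, div_eq_mul_inv]
      _ = mellin (fun t => ((∑' k, Real.exp (-(lam k) * t) : ℝ) : ℂ)) s := hmell.tsum_eq
      _ = ∫ t in Set.Ioi (0 : ℝ),
            ((∑' k, Real.exp (-(lam k) * t) : ℝ) : ℂ) * (t : ℂ) ^ (s - 1) := by
          simp only [mellin, smul_eq_mul]
          exact setIntegral_congr_fun measurableSet_Ioi fun t _ => mul_comm _ _
end
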